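/- arXiv:2506.21870 — 6 statements merged into one kernel-verified Lean document; each statement's English description precedes it below -/
import Mathlib

section
/- Let (A,[·,·],·) be a finite-dimensional Poisson algebra over a field and r ∈ A⊗A. Then the following are equivalent: (1) r is a solution of the Poisson Yang–Baxter equation; (2) for all x*, y* ∈ A*, [r₊(x*), r₊(y*)] = r₊(−ad*(r₊(x*))y* + ad*(r₋(y*))x*) and r₊(x*)·r₊(y*) = r₊(L*(r₊(x*))y* + L*(r₋(y*))x*); (3) for all x*, y* ∈ A*, [r₋(x*), r₋(y*)] = r₋(−ad*(r₋(x*))y* + ad*(r₊(y*))x*) and r₋(x*)·r₋(y*) = r₋(L*(r₋(x*))y* + L*(r₊(y*))x*). -/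
open TensorProduct

section Preamble

variable {k A : Type*} [Field k] [AddCommGroup A] [Module k A]

/-- The Poisson algebra axioms for a pair of bilinear operations `br` (the Lie bracket)
and `mul` (the commutative associative product), including the Leibniz compatibility. -/
structure IsPoisson {k A : Type*} [Field k] [AddCommGroup A] [Module k A]
    (br mul : A →ₗ[k] A →ₗ[k] A) : Prop where
  antisymm : ∀ a b, br a b = - br b a
  jacobi : ∀ a b c, br a (br b c) = br (br a b) c + br b (br a c)
  comm : ∀ a b, mul a b = mul b a
  assoc : ∀ a b c, mul (mul a b) c = mul a (mul b c)
  leibniz : ∀ a b c, br a (mul b c) = mul (br a b) c + mul b (br a c)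

/-- `r ↦ r₊`, where `⟨r₊(x*), y*⟩ = ⟨r, x* ⊗ y*⟩`. -/
noncomputable def rPlus : (A ⊗[k] A) →ₗ[k] Module.Dual k A →ₗ[k] A :=
  TensorProduct.lift <| LinearMap.mk₂ k
    (fun a b => (Module.Dual.eval k A a).smulRight b)
    (fun a a' b => by ext f; simp [add_smul])
    (fun c a b => by ext f; simp [smul_smul])
    (fun a b b' => by ext f; simp)
    (fun c a b => by ext f; simp [smul_smul, mul_comm])

/-- The flip `τ : A ⊗ A → A ⊗ A`. -/
noncomputable def tauT : (A ⊗[k] A) →ₗ[k] A ⊗[k] A := (TensorProduct.comm k A A).toLinearMap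

/-- `r ↦ r₋`, where `⟨r₊(x*), y*⟩ = ⟨r, x* ⊗ y*⟩ = −⟨x*, r₋(y*)⟩`. -/
noncomputable def rMinus : (A ⊗[k] A) →ₗ[k] Module.Dual k A →ₗ[k] A :=
  - (rPlus ∘ₗ tauT)

@[simp] lemma rPlus_tmul (a b : A) (f : Module.Dual k A) :
    rPlus (a ⊗ₜ[k] b) f = f a • b := rfl

@[simp] lemma dualMap_add_apply (f g : A →ₗ[k] A) (y : Module.Dual k A) :
    (f + g).dualMap y = f.dualMap y + g.dualMap y := by ext a; simp

@[simp] lemma dualMap_smul_apply (c : k) (f : A →ₗ[k] A) (y : Module.Dual k A) :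
    (c • f).dualMap y = c • f.dualMap y := by ext a; simp

@[simp] lemma dualMap_neg_apply (f : A →ₗ[k] A) (y : Module.Dual k A) :
    (-f).dualMap y = - f.dualMap y := by ext a; simp

noncomputable def T1213 (m : A →ₗ[k] A →ₗ[k] A) :
    (A ⊗[k] A) ⊗[k] (A ⊗[k] A) →ₗ[k] A ⊗[k] (A ⊗[k] A) :=
  (TensorProduct.map (TensorProduct.lift m) LinearMap.id) ∘ₗ
    (TensorProduct.tensorTensorTensorComm k A A A A).toLinearMap

noncomputable def T1323 (m : A →ₗ[k] A →ₗ[k] A) :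
    (A ⊗[k] A) ⊗[k] (A ⊗[k] A) →ₗ[k] A ⊗[k] (A ⊗[k] A) :=
  (TensorProduct.assoc k A A A).toLinearMap ∘ₗ
    (TensorProduct.map LinearMap.id (TensorProduct.lift m)) ∘ₗ
    (TensorProduct.tensorTensorTensorComm k A A A A).toLinearMap

noncomputable def T2312 (m : A →ₗ[k] A →ₗ[k] A) :
    (A ⊗[k] A) ⊗[k] (A ⊗[k] A) →ₗ[k] A ⊗[k] (A ⊗[k] A) :=
  (TensorProduct.leftComm k A A A).toLinearMap ∘ₗ
    (TensorProduct.map (TensorProduct.lift m ∘ₗ (TensorProduct.comm k A A).toLinearMap)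
      LinearMap.id) ∘ₗ
    (TensorProduct.tensorTensorTensorComm k A A A A).toLinearMap ∘ₗ
    (TensorProduct.map (TensorProduct.comm k A A).toLinearMap LinearMap.id)

noncomputable def T1223 (m : A →ₗ[k] A →ₗ[k] A) :
    (A ⊗[k] A) ⊗[k] (A ⊗[k] A) →ₗ[k] A ⊗[k] (A ⊗[k] A) :=
  (TensorProduct.leftComm k A A A).toLinearMap ∘ₗ
    (TensorProduct.map (TensorProduct.lift m) LinearMap.id) ∘ₗ
    (TensorProduct.tensorTensorTensorComm k A A A A).toLinearMap ∘ₗ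
    (TensorProduct.map (TensorProduct.comm k A A).toLinearMap LinearMap.id)

/-- `C(r) = [r₁₂,r₁₃] + [r₁₃,r₂₃] + [r₁₂,r₂₃]` for the bracket `br`. -/
noncomputable def cybe (br : A →ₗ[k] A →ₗ[k] A) (r : A ⊗[k] A) : A ⊗[k] (A ⊗[k] A) :=
  T1213 br (r ⊗ₜ[k] r) + T1323 br (r ⊗ₜ[k] r) + T1223 br (r ⊗ₜ[k] r)

/-- `A(r) = r₁₂·r₁₃ + r₁₃·r₂₃ − r₂₃·r₁₂` for the product `mul`. -/
noncomputable def aybe (mul : A →ₗ[k] A →ₗ[k] A) (r : A ⊗[k] A) : A ⊗[k] (A ⊗[k] A) :=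
  T1213 mul (r ⊗ₜ[k] r) + T1323 mul (r ⊗ₜ[k] r) - T2312 mul (r ⊗ₜ[k] r)

/-- `r` is a solution of the Poisson Yang–Baxter equation: `C(r) = 0` and `A(r) = 0`. -/
def IsPYBESolution (br mul : A →ₗ[k] A →ₗ[k] A) (r : A ⊗[k] A) : Prop :=
  cybe br r = 0 ∧ aybe mul r = 0

variable (k A) in
/-- `σ₁₃ : a ⊗ b ⊗ c ↦ c ⊗ b ⊗ a`. -/
noncomputable def sigma13 : A ⊗[k] (A ⊗[k] A) →ₗ[k] A ⊗[k] (A ⊗[k] A) :=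
  (TensorProduct.map LinearMap.id (TensorProduct.comm k A A).toLinearMap) ∘ₗ
    (TensorProduct.leftComm k A A A).toLinearMap ∘ₗ
    (TensorProduct.map LinearMap.id (TensorProduct.comm k A A).toLinearMap)

/-- `s ∈ A ⊗ A` is `(ad, L)`-invariant:
`(ad(a)⊗id + id⊗ad(a))(s) = 0` and `(L(a)⊗id − id⊗L(a))(s) = 0` for all `a`. -/
def IsAdLInvariant (br mul : A →ₗ[k] A →ₗ[k] A) (s : A ⊗[k] A) : Prop :=
  ∀ a : A,
    TensorProduct.map (br a) LinearMap.id s + TensorProduct.map LinearMap.id (br a) s = 0 ∧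
    TensorProduct.map (mul a) LinearMap.id s - TensorProduct.map LinearMap.id (mul a) s = 0

/-- The bracket `[x*,y*]_r = −ad*(r₊(x*))y* + ad*(r₋(y*))x*` on the dual space. -/
noncomputable def dualBr (br : A →ₗ[k] A →ₗ[k] A) (r : A ⊗[k] A) :
    Module.Dual k A →ₗ[k] Module.Dual k A →ₗ[k] Module.Dual k A :=
  LinearMap.mk₂ k
    (fun x y => - (br (rPlus r x)).dualMap y + (br (rMinus r y)).dualMap x)
    (fun x x' y => by simp [map_add]; try abel)
    (fun c x y => by simp [map_smul, smul_add]; try abel)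
    (fun x y y' => by simp [map_add]; try abel)
    (fun c x y => by simp [map_smul, smul_add]; try abel)

/-- The product `x*·_r y* = L*(r₊(x*))y* + L*(r₋(y*))x*` on the dual space. -/
noncomputable def dualMul (mul : A →ₗ[k] A →ₗ[k] A) (r : A ⊗[k] A) :
    Module.Dual k A →ₗ[k] Module.Dual k A →ₗ[k] Module.Dual k A :=
  LinearMap.mk₂ k
    (fun x y => (mul (rPlus r x)).dualMap y + (mul (rMinus r y)).dualMap x)
    (fun x x' y => by simp [map_add]; try abel)
    (fun c x y => by simp [map_smul, smul_add]; try abel)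
    (fun x y y' => by simp [map_add]; try abel)
    (fun c x y => by simp [map_smul, smul_add]; try abel)

/-- The descendent operation `a ∘_P b = (P a) ∘ b + a ∘ (P b) + λ a ∘ b`. -/
noncomputable def descOp (m : A →ₗ[k] A →ₗ[k] A) (lam : k) (P : A →ₗ[k] A) :
    A →ₗ[k] A →ₗ[k] A :=
  LinearMap.mk₂ k
    (fun a b => m (P a) b + m a (P b) + lam • m a b)
    (fun a a' b => by simp [map_add, smul_add]; try abel)
    (fun c a b => by simp [map_smul, smul_add, smul_smul, mul_comm]; try abel)
    (fun a b b' => by simp [map_add, smul_add]; try abel)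
    (fun c a b => by simp [map_smul, smul_add, smul_smul, mul_comm]; try abel)

/-- `P` is a Rota–Baxter operator of weight `λ` on the Poisson algebra `(A, br, mul)`. -/
def IsRotaBaxter (br mul : A →ₗ[k] A →ₗ[k] A) (lam : k) (P : A →ₗ[k] A) : Prop :=
  (∀ a b, br (P a) (P b) = P (br (P a) b + br a (P b) + lam • br a b)) ∧
  (∀ a b, mul (P a) (P b) = P (mul (P a) b + mul a (P b) + lam • mul a b))

/-- `((A, br, mul), B, P)` is a quadratic Rota–Baxter Poisson algebra of weight `λ`. -/
structure IsQuadraticRotaBaxter {k A : Type*} [Field k] [AddCommGroup A] [Module k A]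
    (br mul : A →ₗ[k] A →ₗ[k] A) (B : A →ₗ[k] A →ₗ[k] k) (lam : k) (P : A →ₗ[k] A) :
    Prop where
  poisson : IsPoisson br mul
  symm : ∀ a b, B a b = B b a
  nondeg : ∀ a, (∀ b, B a b = 0) → a = 0
  br_invariant : ∀ a b c, B (br a b) c = B a (br b c)
  mul_invariant : ∀ a b c, B (mul a b) c = B a (mul b c)
  rb : IsRotaBaxter br mul lam P
  compat : ∀ a b, B a (P b) + B (P a) b + lam • B a b = 0

/-- The semidirect-product bracket on `A ⊕ A*`:
`[(a,x*),(b,y*)] = ([a,b], −ad*(a)y* + ad*(b)x*)`. -/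
noncomputable def sdBr (br : A →ₗ[k] A →ₗ[k] A) :
    (A × Module.Dual k A) →ₗ[k] (A × Module.Dual k A) →ₗ[k] (A × Module.Dual k A) :=
  LinearMap.mk₂ k
    (fun p q => (br p.1 q.1, - (br p.1).dualMap q.2 + (br q.1).dualMap p.2))
    (fun p p' q => by simp [Prod.ext_iff, map_add]; try abel)
    (fun c p q => by simp [Prod.ext_iff, map_smul, smul_add]; try abel)
    (fun p q q' => by simp [Prod.ext_iff, map_add]; try abel)
    (fun c p q => by simp [Prod.ext_iff, map_smul, smul_add]; try abel)

/-- The semidirect-product multiplication on `A ⊕ A*`: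
`(a,x*)·(b,y*) = (a·b, L*(a)y* + L*(b)x*)`. -/
noncomputable def sdMul (mul : A →ₗ[k] A →ₗ[k] A) :
    (A × Module.Dual k A) →ₗ[k] (A × Module.Dual k A) →ₗ[k] (A × Module.Dual k A) :=
  LinearMap.mk₂ k
    (fun p q => (mul p.1 q.1, (mul p.1).dualMap q.2 + (mul q.1).dualMap p.2))
    (fun p p' q => by simp [Prod.ext_iff, map_add]; try abel)
    (fun c p q => by simp [Prod.ext_iff, map_smul, smul_add]; try abel)
    (fun p q q' => by simp [Prod.ext_iff, map_add]; try abel)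
    (fun c p q => by simp [Prod.ext_iff, map_smul, smul_add]; try abel)

/-- The canonical bilinear form `𝔅_d((a,x*),(b,y*)) = ⟨a,y*⟩ + ⟨b,x*⟩` on `A ⊕ A*`. -/
noncomputable def sdForm :
    (A × Module.Dual k A) →ₗ[k] (A × Module.Dual k A) →ₗ[k] k :=
  LinearMap.mk₂ k
    (fun p q => q.2 p.1 + p.2 q.1)
    (fun p p' q => by simp; try ring)
    (fun c p q => by simp [smul_add, smul_smul]; try ring)
    (fun p q q' => by simp; try ring)
    (fun c p q => by simp [smul_add, smul_smul]; try ring)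

end Preamble

section Aux

variable {k A : Type*} [Field k] [AddCommGroup A] [Module k A]

/-- Pairing of `A ⊗ (A ⊗ A)` with three dual functionals. -/
noncomputable def pair3 (x y z : Module.Dual k A) : Module.Dual k (A ⊗[k] (A ⊗[k] A)) :=
  TensorProduct.dualDistrib k A (A ⊗[k] A)
    (x ⊗ₜ[k] (TensorProduct.dualDistrib k A A (y ⊗ₜ[k] z)))

@[simp] lemma pair3_tmul (x y z : Module.Dual k A) (a b c : A) :
    pair3 x y z (a ⊗ₜ[k] (b ⊗ₜ[k] c)) = x a * (y b * z c) := by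
  simp [pair3]

@[simp] lemma tauT_tmul (a b : A) : tauT (a ⊗ₜ[k] b) = b ⊗ₜ[k] a := rfl

lemma tauT_tauT (r : A ⊗[k] A) : tauT (tauT r) = r := by
  induction r using TensorProduct.induction_on with
  | zero => simp
  | tmul a b => simp
  | add r s hr hs => simp [map_add, hr, hs]

lemma rMinus_apply (r : A ⊗[k] A) (f : Module.Dual k A) :
    rMinus r f = - rPlus (tauT r) f := by
  simp [rMinus]

lemma pair_swap (r : A ⊗[k] A) (f g : Module.Dual k A) :
    g (rPlus r f) = f (rPlus (tauT r) g) := by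
  induction r using TensorProduct.induction_on with
  | zero => simp
  | tmul a b => simp; ring
  | add r s hr hs => simp [map_add, hr, hs]

variable (m : A →ₗ[k] A →ₗ[k] A) (x y z : Module.Dual k A)

lemma pair3_T1213 (r s : A ⊗[k] A) :
    pair3 x y z (T1213 m (r ⊗ₜ[k] s)) =
      x (m (rPlus (tauT r) y) (rPlus (tauT s) z)) := by
  induction r using TensorProduct.induction_on with
  | zero => simp [T1213]
  | tmul a b =>
    induction s using TensorProduct.induction_on with
    | zero => simp [T1213]
    | tmul c d =>
      simp [T1213, TensorProduct.tensorTensorTensorComm_tmul, map_smul]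
      ring
    | add s1 s2 h1 h2 =>
      simp only [TensorProduct.tmul_add, TensorProduct.add_tmul, map_add,
        LinearMap.add_apply, h1, h2]
  | add r1 r2 h1 h2 =>
      simp only [TensorProduct.tmul_add, TensorProduct.add_tmul, map_add,
        LinearMap.add_apply, h1, h2]

lemma pair3_T1323 (r s : A ⊗[k] A) :
    pair3 x y z (T1323 m (r ⊗ₜ[k] s)) = z (m (rPlus r x) (rPlus s y)) := by
  induction r using TensorProduct.induction_on with
  | zero => simp [T1323]
  | tmul a b =>
    induction s using TensorProduct.induction_on with
    | zero => simp [T1323]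
    | tmul c d =>
      simp only [T1323, LinearMap.coe_comp, LinearEquiv.coe_coe, Function.comp_apply,
        TensorProduct.map_tmul, TensorProduct.tensorTensorTensorComm_tmul,
        TensorProduct.leftComm_tmul, TensorProduct.assoc_tmul, TensorProduct.comm_tmul,
        TensorProduct.lift.tmul, LinearMap.id_coe, id_eq, pair3_tmul, rPlus_tmul,
        tauT_tmul, map_smul, LinearMap.smul_apply, smul_eq_mul]
      ring
    | add s1 s2 h1 h2 =>
      simp only [TensorProduct.tmul_add, TensorProduct.add_tmul, map_add,
        LinearMap.add_apply, h1, h2]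
  | add r1 r2 h1 h2 =>
      simp only [TensorProduct.tmul_add, TensorProduct.add_tmul, map_add,
        LinearMap.add_apply, h1, h2]

lemma pair3_T2312 (r s : A ⊗[k] A) :
    pair3 x y z (T2312 m (r ⊗ₜ[k] s)) = y (m (rPlus (tauT s) z) (rPlus r x)) := by
  induction r using TensorProduct.induction_on with
  | zero => simp [T2312]
  | tmul a b =>
    induction s using TensorProduct.induction_on with
    | zero => simp [T2312]
    | tmul c d =>
      simp only [T2312, LinearMap.coe_comp, LinearEquiv.coe_coe, Function.comp_apply,
        TensorProduct.map_tmul, TensorProduct.tensorTensorTensorComm_tmul,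
        TensorProduct.leftComm_tmul, TensorProduct.assoc_tmul, TensorProduct.comm_tmul,
        TensorProduct.lift.tmul, LinearMap.id_coe, id_eq, pair3_tmul, rPlus_tmul,
        tauT_tmul, map_smul, LinearMap.smul_apply, smul_eq_mul]
      ring
    | add s1 s2 h1 h2 =>
      simp only [TensorProduct.tmul_add, TensorProduct.add_tmul, map_add,
        LinearMap.add_apply, h1, h2]
  | add r1 r2 h1 h2 =>
      simp only [TensorProduct.tmul_add, TensorProduct.add_tmul, map_add,
        LinearMap.add_apply, h1, h2]

lemma pair3_T1223 (r s : A ⊗[k] A) :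
    pair3 x y z (T1223 m (r ⊗ₜ[k] s)) = y (m (rPlus r x) (rPlus (tauT s) z)) := by
  induction r using TensorProduct.induction_on with
  | zero => simp [T1223]
  | tmul a b =>
    induction s using TensorProduct.induction_on with
    | zero => simp [T1223]
    | tmul c d =>
      simp only [T1223, LinearMap.coe_comp, LinearEquiv.coe_coe, Function.comp_apply,
        TensorProduct.map_tmul, TensorProduct.tensorTensorTensorComm_tmul,
        TensorProduct.leftComm_tmul, TensorProduct.assoc_tmul, TensorProduct.comm_tmul,
        TensorProduct.lift.tmul, LinearMap.id_coe, id_eq, pair3_tmul, rPlus_tmul,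
        tauT_tmul, map_smul, LinearMap.smul_apply, smul_eq_mul]
      ring
    | add s1 s2 h1 h2 =>
      simp only [TensorProduct.tmul_add, TensorProduct.add_tmul, map_add,
        LinearMap.add_apply, h1, h2]
  | add r1 r2 h1 h2 =>
      simp only [TensorProduct.tmul_add, TensorProduct.add_tmul, map_add,
        LinearMap.add_apply, h1, h2]

lemma pair3_zero_iff [FiniteDimensional k A] (t : A ⊗[k] (A ⊗[k] A)) :
    (∀ x y z : Module.Dual k A, pair3 x y z t = 0) ↔ t = 0 := by
  constructor
  · intro h
    let b := Module.Free.chooseBasis k A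
    let b3 := Module.Basis.tensorProduct b (Module.Basis.tensorProduct b b)
    have key : ∀ p1 p2 p3, b3.repr t (p1, p2, p3) =
        pair3 (b.coord p1) (b.coord p2) (b.coord p3) t := by
      intro p1 p2 p3
      have heq : (Finsupp.lapply (p1, p2, p3) ∘ₗ (b3.repr : _ ≃ₗ[k] _).toLinearMap)
          = (pair3 (b.coord p1) (b.coord p2) (b.coord p3) : _ →ₗ[k] k) := by
        apply b3.ext
        rintro ⟨i, j, l⟩
        by_cases h1 : i = p1 <;> by_cases h2 : j = p2 <;> by_cases h3 : l = p3 <;>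
          simp [b3, Module.Basis.tensorProduct_apply, Module.Basis.coord_apply, Module.Basis.repr_self,
            Finsupp.single_apply, Prod.ext_iff, h1, h2, h3]
      exact (LinearMap.congr_fun heq t)
    have hz : b3.repr t = 0 := by
      ext p
      obtain ⟨p1, p2, p3⟩ := p
      rw [key]
      exact h _ _ _
    exact (LinearEquiv.map_eq_zero_iff b3.repr).mp hz
  · rintro rfl x y z
    simp

lemma pair3_cybe (br : A →ₗ[k] A →ₗ[k] A) (r : A ⊗[k] A) :
    pair3 x y z (cybe br r) =
      x (br (rPlus (tauT r) y) (rPlus (tauT r) z)) + z (br (rPlus r x) (rPlus r y))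
        + y (br (rPlus r x) (rPlus (tauT r) z)) := by
  simp only [cybe, map_add, pair3_T1213, pair3_T1323, pair3_T1223]

lemma pair3_aybe (mul : A →ₗ[k] A →ₗ[k] A) (r : A ⊗[k] A) :
    pair3 x y z (aybe mul r) =
      x (mul (rPlus (tauT r) y) (rPlus (tauT r) z)) + z (mul (rPlus r x) (rPlus r y))
        - y (mul (rPlus (tauT r) z) (rPlus r x)) := by
  simp only [aybe, map_add, map_sub, pair3_T1213, pair3_T1323, pair3_T2312]

end Aux

/-- characterization of solutions of the Poisson Yang–Baxter equation via
`r₊` and via `r₋`. -/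
theorem statement1 {k A : Type*} [Field k] [AddCommGroup A] [Module k A]
    [FiniteDimensional k A]
    (br mul : A →ₗ[k] A →ₗ[k] A) (hP : IsPoisson br mul) (r : A ⊗[k] A) :
    (IsPYBESolution br mul r ↔
      (∀ x y : Module.Dual k A,
        br (rPlus r x) (rPlus r y) =
          rPlus r (- (br (rPlus r x)).dualMap y + (br (rMinus r y)).dualMap x) ∧
        mul (rPlus r x) (rPlus r y) =
          rPlus r ((mul (rPlus r x)).dualMap y + (mul (rMinus r y)).dualMap x))) ∧
    (IsPYBESolution br mul r ↔
      (∀ x y : Module.Dual k A,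
        br (rMinus r x) (rMinus r y) =
          rMinus r (- (br (rMinus r x)).dualMap y + (br (rPlus r y)).dualMap x) ∧
        mul (rMinus r x) (rMinus r y) =
          rMinus r ((mul (rMinus r x)).dualMap y + (mul (rPlus r y)).dualMap x))) := by
  classical
  have hswap : ∀ (f g : Module.Dual k A), g (rPlus r f) = f (rPlus (tauT r) g) :=
    pair_swap r
  have hswap' : ∀ (f g : Module.Dual k A), g (rPlus (tauT r) f) = f (rPlus r g) := by
    intro f g; rw [pair_swap, tauT_tauT]
  have e2br : ∀ x y z : Module.Dual k A,
      pair3 x y z (cybe br r) =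
        z (br (rPlus r x) (rPlus r y)) -
          z (rPlus r (- (br (rPlus r x)).dualMap y + (br (rMinus r y)).dualMap x)) := by
    intro x y z
    rw [pair3_cybe, hswap]
    simp only [LinearMap.add_apply, LinearMap.neg_apply, LinearMap.dualMap_apply,
      rMinus_apply, map_neg, LinearMap.neg_apply]
    ring
  have e2mul : ∀ x y z : Module.Dual k A,
      pair3 x y z (aybe mul r) =
        z (mul (rPlus r x) (rPlus r y)) -
          z (rPlus r ((mul (rPlus r x)).dualMap y + (mul (rMinus r y)).dualMap x)) := by
    intro x y z
    rw [pair3_aybe, hswap, hP.comm (rPlus (tauT r) z) (rPlus r x)]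
    simp only [LinearMap.add_apply, LinearMap.dualMap_apply,
      rMinus_apply, map_neg, LinearMap.neg_apply]
    ring
  have e3br : ∀ x y z : Module.Dual k A,
      - pair3 z y x (cybe br r) =
        z (br (rMinus r x) (rMinus r y)) -
          z (rMinus r (- (br (rMinus r x)).dualMap y + (br (rPlus r y)).dualMap x)) := by
    intro x y z
    rw [pair3_cybe,
      hP.antisymm (rPlus (tauT r) y) (rPlus (tauT r) x),
      hP.antisymm (rPlus r z) (rPlus r y),
      hP.antisymm (rPlus r z) (rPlus (tauT r) x)]
    simp only [rMinus_apply, map_neg, neg_neg, LinearMap.neg_apply, LinearMap.add_apply,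
      LinearMap.dualMap_apply, hswap']
    ring
  have e3mul : ∀ x y z : Module.Dual k A,
      pair3 z y x (aybe mul r) =
        z (mul (rMinus r x) (rMinus r y)) -
          z (rMinus r ((mul (rMinus r x)).dualMap y + (mul (rPlus r y)).dualMap x)) := by
    intro x y z
    rw [pair3_aybe,
      hP.comm (rPlus (tauT r) y) (rPlus (tauT r) x),
      hP.comm (rPlus r z) (rPlus r y)]
    simp only [rMinus_apply, map_neg, neg_neg, LinearMap.neg_apply, LinearMap.add_apply,
      LinearMap.dualMap_apply, hswap']
    ring
  have key2br : ∀ x y : Module.Dual k A,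
      (br (rPlus r x) (rPlus r y) =
        rPlus r (- (br (rPlus r x)).dualMap y + (br (rMinus r y)).dualMap x)) ↔
      (∀ z : Module.Dual k A, pair3 x y z (cybe br r) = 0) := by
    intro x y
    rw [← sub_eq_zero, ← Module.forall_dual_apply_eq_zero_iff k]
    exact forall_congr' fun z => by rw [map_sub, ← e2br x y z]
  have key2mul : ∀ x y : Module.Dual k A,
      (mul (rPlus r x) (rPlus r y) =
        rPlus r ((mul (rPlus r x)).dualMap y + (mul (rMinus r y)).dualMap x)) ↔
      (∀ z : Module.Dual k A, pair3 x y z (aybe mul r) = 0) := by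
    intro x y
    rw [← sub_eq_zero, ← Module.forall_dual_apply_eq_zero_iff k]
    exact forall_congr' fun z => by rw [map_sub, ← e2mul x y z]
  have key3br : ∀ x y : Module.Dual k A,
      (br (rMinus r x) (rMinus r y) =
        rMinus r (- (br (rMinus r x)).dualMap y + (br (rPlus r y)).dualMap x)) ↔
      (∀ z : Module.Dual k A, pair3 z y x (cybe br r) = 0) := by
    intro x y
    rw [← sub_eq_zero, ← Module.forall_dual_apply_eq_zero_iff k]
    exact forall_congr' fun z => by rw [map_sub, ← e3br x y z, neg_eq_zero]
  have key3mul : ∀ x y : Module.Dual k A,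
      (mul (rMinus r x) (rMinus r y) =
        rMinus r ((mul (rMinus r x)).dualMap y + (mul (rPlus r y)).dualMap x)) ↔
      (∀ z : Module.Dual k A, pair3 z y x (aybe mul r) = 0) := by
    intro x y
    rw [← sub_eq_zero, ← Module.forall_dual_apply_eq_zero_iff k]
    exact forall_congr' fun z => by rw [map_sub, ← e3mul x y z]
  have hsol : IsPYBESolution br mul r ↔
      ((∀ x y z : Module.Dual k A, pair3 x y z (cybe br r) = 0) ∧
       (∀ x y z : Module.Dual k A, pair3 x y z (aybe mul r) = 0)) := by
    unfold IsPYBESolution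
    rw [← pair3_zero_iff (cybe br r), ← pair3_zero_iff (aybe mul r)]
  constructor
  · rw [hsol]
    constructor
    · rintro ⟨h1, h2⟩ x y
      exact ⟨(key2br x y).mpr fun z => h1 x y z, (key2mul x y).mpr fun z => h2 x y z⟩
    · intro h
      exact ⟨fun x y z => (key2br x y).mp (h x y).1 z,
             fun x y z => (key2mul x y).mp (h x y).2 z⟩
  · rw [hsol]
    constructor
    · rintro ⟨h1, h2⟩ x y
      exact ⟨(key3br x y).mpr fun z => h1 z y x, (key3mul x y).mpr fun z => h2 z y x⟩
    · intro h
      exact ⟨fun x y z => (key3br z y).mp (h z y).1 x,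
             fun x y z => (key3mul z y).mp (h z y).2 x⟩
end

section
/- Let (A,[·,·],·) be a finite-dimensional Poisson algebra over a field, r ∈ A⊗A, and let S be the symmetric part of r (so r = S + Λ with τ(S) = S and τ(Λ) = −Λ). Then the following are equivalent: (1) S is (ad,L)-invariant; (2) S₊(ad*(a)x*) + [a, S₊(x*)] = 0 and S₊(L*(a)x*) − a·S₊(x*) = 0 for all a ∈ A, x* ∈ A*; (3) ad*(S₊(x*))y* + ad*(S₊(y*))x* = 0 and L*(S₊(x*))y* − L*(S₊(y*))x* = 0 for all x*, y* ∈ A*. -/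
open TensorProduct

section MyAux
variable {k A : Type*} [Field k] [AddCommGroup A] [Module k A]

lemma myRPlus_map (f g : A →ₗ[k] A) (s : A ⊗[k] A) (x : Module.Dual k A) :
    rPlus (TensorProduct.map f g s) x = g (rPlus s (f.dualMap x)) := by
  induction s using TensorProduct.induction_on with
  | zero => simp
  | tmul a b => simp
  | add s t hs ht => simp [map_add, hs, ht]

lemma myPair_tau (s : A ⊗[k] A) (x y : Module.Dual k A) :
    y (rPlus (tauT s) x) = x (rPlus s y) := by
  induction s using TensorProduct.induction_on with
  | zero => simp
  | tmul a b => simp [tauT, mul_comm]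
  | add s t hs ht => simp [map_add, hs, ht]

lemma myRepr_eq {ι : Type*} (b : Module.Basis ι k A) (s : A ⊗[k] A) (i j : ι) :
    (Module.Basis.tensorProduct b b).repr s (i, j) = b.coord j (rPlus s (b.coord i)) := by
  induction s using TensorProduct.induction_on with
  | zero => simp
  | tmul a c => simp [Module.Basis.tensorProduct_repr_tmul_apply, mul_comm]
  | add s t hs ht => simp [map_add, hs, ht]

lemma myEq_zero_of_pair (s : A ⊗[k] A)
    (h : ∀ x y : Module.Dual k A, y (rPlus s x) = 0) : s = 0 := by
  classical
  let b := Module.Basis.ofVectorSpace k A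
  refine (Module.Basis.tensorProduct b b).ext_elem ?_
  rintro ⟨i, j⟩
  rw [myRepr_eq b s i j]
  simpa using h (b.coord i) (b.coord j)

end MyAux

/-- equivalent characterizations of the `(ad, L)`-invariance of the symmetric
part `S` of `r ∈ A ⊗ A`. -/
theorem statement2 {k A : Type*} [Field k] [AddCommGroup A] [Module k A]
    [FiniteDimensional k A]
    (br mul : A →ₗ[k] A →ₗ[k] A) (hP : IsPoisson br mul)
    (r S Lam : A ⊗[k] A) (hdec : r = S + Lam) (hS : tauT S = S) (hLam : tauT Lam = - Lam) :
    (IsAdLInvariant br mul S ↔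
      (∀ (a : A) (x : Module.Dual k A),
        rPlus S ((br a).dualMap x) + br a (rPlus S x) = 0 ∧
        rPlus S ((mul a).dualMap x) - mul a (rPlus S x) = 0)) ∧
    (IsAdLInvariant br mul S ↔
      (∀ x y : Module.Dual k A,
        (br (rPlus S x)).dualMap y + (br (rPlus S y)).dualMap x = 0 ∧
        (mul (rPlus S x)).dualMap y - (mul (rPlus S y)).dualMap x = 0)) := by
  have sym : ∀ x y : Module.Dual k A, y (rPlus S x) = x (rPlus S y) := by
    intro x y
    conv_lhs => rw [← hS]
    rw [myPair_tau]
  -- (1) ↔ (2)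
  have h12 : IsAdLInvariant br mul S ↔
      (∀ (a : A) (x : Module.Dual k A),
        rPlus S ((br a).dualMap x) + br a (rPlus S x) = 0 ∧
        rPlus S ((mul a).dualMap x) - mul a (rPlus S x) = 0) := by
    constructor
    · intro h a x
      obtain ⟨h1, h2⟩ := h a
      constructor
      · have := congrArg (fun t => rPlus t x) h1
        simpa [map_add, myRPlus_map] using this
      · have := congrArg (fun t => rPlus t x) h2
        simpa [map_sub, myRPlus_map] using this
    · intro h a
      constructor
      · apply myEq_zero_of_pair
        intro x y
        have h0 := congrArg y (h a x).1
        simpa [map_add, myRPlus_map] using h0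
      · apply myEq_zero_of_pair
        intro x y
        have h0 := congrArg y (h a x).2
        simpa [map_sub, myRPlus_map] using h0
  refine ⟨h12, h12.trans ?_⟩
  constructor
  · intro h x y
    constructor
    · refine LinearMap.ext fun a => ?_
      have h0 := congrArg y (h a x).1
      simp only [map_add, map_zero] at h0
      rw [sym _ y] at h0
      simp only [LinearMap.dualMap_apply] at h0
      simp only [LinearMap.add_apply, LinearMap.zero_apply, LinearMap.dualMap_apply]
      rw [hP.antisymm (rPlus S x) a, hP.antisymm (rPlus S y) a]
      simp only [map_neg]
      linear_combination -h0
    · refine LinearMap.ext fun a => ?_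
      have h0 := congrArg y (h a x).2
      simp only [map_sub, map_zero] at h0
      rw [sym _ y] at h0
      simp only [LinearMap.dualMap_apply] at h0
      simp only [LinearMap.sub_apply, LinearMap.zero_apply, LinearMap.dualMap_apply]
      rw [hP.comm (rPlus S x) a, hP.comm (rPlus S y) a]
      linear_combination -h0
  · intro h a x
    constructor
    · rw [← Module.forall_dual_apply_eq_zero_iff k]
      intro y
      have h0 := congrArg (fun f => f a) (h x y).1
      simp only [LinearMap.add_apply, LinearMap.dualMap_apply, LinearMap.zero_apply] at h0
      simp only [map_add, LinearMap.dualMap_apply]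
      rw [sym _ y]
      simp only [LinearMap.dualMap_apply]
      rw [hP.antisymm a (rPlus S y), hP.antisymm a (rPlus S x)]
      simp only [map_neg]
      linear_combination -h0
    · rw [← Module.forall_dual_apply_eq_zero_iff k]
      intro y
      have h0 := congrArg (fun f => f a) (h x y).2
      simp only [LinearMap.sub_apply, LinearMap.dualMap_apply, LinearMap.zero_apply] at h0
      simp only [map_sub, LinearMap.dualMap_apply]
      rw [sym _ y]
      simp only [LinearMap.dualMap_apply]
      rw [hP.comm a (rPlus S y), hP.comm a (rPlus S x)]
      linear_combination -h0
end

section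
/- Let (A,[·,·]_A,·_A) be a finite-dimensional Poisson algebra over a field. Define on 𝔄 = A ⊕ A* the operations [(a,x*),(b,y*)] = ([a,b]_A, −ad*(a)y* + ad*(b)x*) and (a,x*)·(b,y*) = (a·_A b, L*(a)y* + L*(b)x*), and the bilinear form 𝔅_d((a,x*),(b,y*)) = ⟨a,y*⟩ + ⟨b,x*⟩. Then (𝔄,[·,·],·,𝔅_d) is a quadratic Poisson algebra, i.e., 𝔄 is a Poisson algebra and 𝔅_d is a nondegenerate symmetric invariant bilinear form on it. -/
open TensorProduct

/-- the semidirect product `A ⋉ A*` together with the canonical bilinear form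
`𝔅_d` is a quadratic Poisson algebra. -/
theorem statement3 {k A : Type*} [Field k] [AddCommGroup A] [Module k A]
    [FiniteDimensional k A]
    (br mul : A →ₗ[k] A →ₗ[k] A) (hP : IsPoisson br mul) :
    IsPoisson (sdBr br) (sdMul mul) ∧
    (∀ p q : A × Module.Dual k A, sdForm p q = sdForm q p) ∧
    (∀ p, (∀ q : A × Module.Dual k A, sdForm p q = 0) → p = 0) ∧
    (∀ p q w : A × Module.Dual k A, sdForm (sdBr br p q) w = sdForm p (sdBr br q w)) ∧
    (∀ p q w : A × Module.Dual k A, sdForm (sdMul mul p q) w = sdForm p (sdMul mul q w)) := by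
  have hbr : ∀ (p q : A × Module.Dual k A),
      sdBr br p q = (br p.1 q.1, - (br p.1).dualMap q.2 + (br q.1).dualMap p.2) :=
    fun p q => rfl
  have hmul : ∀ (p q : A × Module.Dual k A),
      sdMul mul p q = (mul p.1 q.1, (mul p.1).dualMap q.2 + (mul q.1).dualMap p.2) :=
    fun p q => rfl
  have hform : ∀ (p q : A × Module.Dual k A), sdForm p q = q.2 p.1 + p.2 q.1 :=
    fun p q => rfl
  refine ⟨⟨?_, ?_, ?_, ?_, ?_⟩, ?_, ?_, ?_, ?_⟩
  · -- antisymm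
    rintro ⟨a, x⟩ ⟨b, y⟩
    simp only [hbr, Prod.neg_mk, Prod.mk.injEq]
    refine ⟨hP.antisymm a b, ?_⟩
    ext d
    simp only [LinearMap.add_apply, LinearMap.neg_apply, LinearMap.dualMap_apply]
    ring
  · -- jacobi
    rintro ⟨a, x⟩ ⟨b, y⟩ ⟨c, z⟩
    simp only [hbr, Prod.mk_add_mk, Prod.mk.injEq]
    refine ⟨hP.jacobi a b c, ?_⟩
    ext d
    simp only [LinearMap.add_apply, LinearMap.neg_apply, LinearMap.dualMap_apply,
      LinearMap.map_add, LinearMap.map_neg, map_add, map_neg]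
    have j1 := congrArg x (hP.jacobi b c d)
    have j2 := congrArg y (hP.jacobi a c d)
    have j3 := congrArg z (hP.jacobi a b d)
    simp only [map_add] at j1 j2 j3
    linear_combination j2 - j1 - j3
  · -- comm
    rintro ⟨a, x⟩ ⟨b, y⟩
    simp only [hmul, Prod.mk.injEq]
    exact ⟨hP.comm a b, by abel⟩
  · -- assoc
    rintro ⟨a, x⟩ ⟨b, y⟩ ⟨c, z⟩
    simp only [hmul, Prod.mk_add_mk, Prod.mk.injEq]
    refine ⟨hP.assoc a b c, ?_⟩
    ext d
    simp only [LinearMap.add_apply, LinearMap.dualMap_apply, LinearMap.map_add, map_add]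
    have c1 : mul (mul a b) d = mul b (mul a d) := by
      rw [hP.comm a b, hP.assoc b a d]
    have c2 : mul a (mul c d) = mul c (mul a d) := by
      rw [← hP.assoc a c d, hP.comm a c, hP.assoc c a d]
    have c3 : mul b (mul c d) = mul (mul b c) d := (hP.assoc b c d).symm
    linear_combination congrArg z c1 + congrArg y c2 + congrArg x c3
  · -- leibniz
    rintro ⟨a, x⟩ ⟨b, y⟩ ⟨c, z⟩
    simp only [hbr, hmul, Prod.mk_add_mk, Prod.mk.injEq]
    refine ⟨hP.leibniz a b c, ?_⟩
    ext d
    simp only [LinearMap.add_apply, LinearMap.neg_apply, LinearMap.dualMap_apply,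
      LinearMap.map_add, LinearMap.map_neg, map_add, map_neg]
    have hx0 : br (mul b c) d = br b (mul c d) + br c (mul b d) := by
      rw [hP.leibniz b c d, hP.leibniz c b d, hP.antisymm (mul b c) d, hP.leibniz d b c,
        hP.antisymm d b, hP.antisymm d c, hP.antisymm c b]
      simp only [map_neg, LinearMap.neg_apply, neg_add_rev, neg_neg]
      rw [hP.comm (br b d) c]
      abel
    have hz := congrArg z (hP.leibniz a b d)
    have hy := congrArg y (hP.leibniz a c d)
    have hx := congrArg x hx0
    simp only [map_add] at hz hy hx
    linear_combination hz + hy + hx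
  · -- symm of form
    rintro ⟨a, x⟩ ⟨b, y⟩
    simp only [hform]; ring
  · -- nondegeneracy
    rintro ⟨a, x⟩ h
    have h1 : ∀ y : Module.Dual k A, y a = 0 := by
      intro y
      have := h (0, y)
      simpa [hform] using this
    have h2 : ∀ b : A, x b = 0 := by
      intro b
      have := h (b, 0)
      simpa [hform] using this
    have ha : a = 0 := (Module.forall_dual_apply_eq_zero_iff k a).mp h1
    have hx : x = 0 := by ext b; exact h2 b
    simp [ha, hx]
  · -- br invariance
    rintro ⟨a, x⟩ ⟨b, y⟩ ⟨c, z⟩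
    simp only [hbr, hform, LinearMap.add_apply, LinearMap.neg_apply, LinearMap.dualMap_apply]
    have i1 := congrArg z (hP.antisymm a b)
    have i2 := congrArg y (hP.antisymm a c)
    simp only [map_neg] at i1 i2
    linear_combination i1 - i2
  · -- mul invariance
    rintro ⟨a, x⟩ ⟨b, y⟩ ⟨c, z⟩
    simp only [hmul, hform, LinearMap.add_apply, LinearMap.dualMap_apply]
    have i1 := congrArg z (hP.comm a b)
    have i2 := congrArg y (hP.comm a c)
    linear_combination i1 + i2
end

section
/- Let (A,[·,·],·) be a finite-dimensional Poisson algebra over a field and 𝔅 a nondegenerate bilinear form on A. Let I_𝔅: A* → A be the linear isomorphism defined by ⟨I_𝔅⁻¹(a), b⟩ = 𝔅(a,b) and r_𝔅 ∈ A⊗A the 2-tensor defined by ⟨r_𝔅, x*⊗y*⟩ = ⟨I_𝔅(x*), y*⟩. Then (A,[·,·],·,𝔅) is a quadratic Poisson algebra (i.e., 𝔅 is symmetric and invariant) if and only if r_𝔅 is symmetric (τ(r_𝔅) = r_𝔅) and (ad,L)-invariant. -/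
open TensorProduct

section Aux4

variable {k A : Type*} [Field k] [AddCommGroup A] [Module k A]

lemma aux4_rPlus_map_left (f : A →ₗ[k] A) (r : A ⊗[k] A) (x : Module.Dual k A) :
    rPlus (TensorProduct.map f LinearMap.id r) x = rPlus r (f.dualMap x) := by
  induction r using TensorProduct.induction_on with
  | zero => simp
  | tmul a b => simp
  | add r s hr hs => simp [hr, hs]

lemma aux4_rPlus_map_right (f : A →ₗ[k] A) (r : A ⊗[k] A) (x : Module.Dual k A) :
    rPlus (TensorProduct.map LinearMap.id f r) x = f (rPlus r x) := by
  induction r using TensorProduct.induction_on with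
  | zero => simp
  | tmul a b => simp
  | add r s hr hs => simp [hr, hs]

lemma aux4_rPlus_tau (r : A ⊗[k] A) (x y : Module.Dual k A) :
    y (rPlus (tauT r) x) = x (rPlus r y) := by
  induction r using TensorProduct.induction_on with
  | zero => simp [tauT]
  | tmul a b => simp [tauT, mul_comm]
  | add r s hr hs =>
    simp only [tauT, LinearEquiv.coe_coe] at hr hs ⊢
    simp [map_add, hr, hs]

lemma aux4_rPlus_injective [FiniteDimensional k A] :
    Function.Injective (rPlus : A ⊗[k] A →ₗ[k] Module.Dual k A →ₗ[k] A) := by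
  have h : (rPlus : A ⊗[k] A →ₗ[k] Module.Dual k A →ₗ[k] A) =
      (dualTensorHomEquiv k (Module.Dual k A) A).toLinearMap ∘ₗ
        (TensorProduct.congr (Module.evalEquiv k A) (LinearEquiv.refl k A)).toLinearMap := by
    apply TensorProduct.ext'
    intro a b
    ext x
    simp [dualTensorHomEquiv]
  rw [h]
  simp only [LinearMap.coe_comp, LinearEquiv.coe_coe]
  exact (dualTensorHomEquiv k (Module.Dual k A) A).injective.comp
    (TensorProduct.congr (Module.evalEquiv k A) (LinearEquiv.refl k A)).injective

end Aux4

/-- `(A, br, mul, B)` is a quadratic Poisson algebra iff the `2`-tensor `r_𝔅`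
associated to the nondegenerate bilinear form `B` is symmetric and `(ad, L)`-invariant. -/
theorem statement4 {k A : Type*} [Field k] [AddCommGroup A] [Module k A]
    [FiniteDimensional k A]
    (br mul : A →ₗ[k] A →ₗ[k] A) (hP : IsPoisson br mul)
    (B : A →ₗ[k] A →ₗ[k] k)
    (hnd : ∀ a, (∀ b, B a b = 0) → a = 0)
    (IB : Module.Dual k A ≃ₗ[k] A) (hIB : ∀ a b, IB.symm a b = B a b)
    (rB : A ⊗[k] A) (hrB : ∀ x y : Module.Dual k A, y (rPlus rB x) = y (IB x)) :
    ((∀ a b, B a b = B b a) ∧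
      (∀ a b c, B (br a b) c = B a (br b c)) ∧
      (∀ a b c, B (mul a b) c = B a (mul b c))) ↔
    (tauT rB = rB ∧ IsAdLInvariant br mul rB) := by
  have hr : ∀ x : Module.Dual k A, rPlus rB x = IB x := by
    intro x
    rw [← sub_eq_zero, ← Module.forall_dual_apply_eq_zero_iff k]
    intro y
    simp [hrB x y]
  have hB : ∀ a b, B a b = IB.symm a b := fun a b => (hIB a b).symm
  -- symmetry ↔ tau
  have h1 : (∀ a b, B a b = B b a) ↔ tauT rB = rB := by
    constructor
    · intro hs
      apply aux4_rPlus_injective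
      ext x
      rw [← sub_eq_zero, ← Module.forall_dual_apply_eq_zero_iff k]
      intro y
      have h2 : y (rPlus (tauT rB) x) = x (IB y) := by rw [aux4_rPlus_tau, hr]
      have h3 : x (IB y) = y (IB x) := by
        have h4 := hs (IB x) (IB y)
        rw [hB, hB] at h4
        simpa using h4
      simp [h2, h3, hr]
    · intro ht a b
      have hx : (IB.symm b) (IB (IB.symm a)) = (IB.symm a) (IB (IB.symm b)) := by
        have h5 := aux4_rPlus_tau rB (IB.symm a) (IB.symm b)
        rw [ht, hr, hr] at h5
        exact h5
      rw [hB a b, hB b a]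
      simpa using hx.symm
  -- br-invariance ↔ ad-invariance
  have h2 : (∀ a b c, B (br a b) c = B a (br b c)) ↔
      (∀ a : A, TensorProduct.map (br a) LinearMap.id rB
        + TensorProduct.map LinearMap.id (br a) rB = 0) := by
    constructor
    · intro hb a
      apply aux4_rPlus_injective
      rw [map_zero]
      ext x
      rw [LinearMap.zero_apply]
      have key : rPlus (TensorProduct.map (br a) LinearMap.id rB
          + TensorProduct.map LinearMap.id (br a) rB) x
          = IB ((br a).dualMap x) + br a (IB x) := by
        simp [aux4_rPlus_map_left, aux4_rPlus_map_right, hr]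
      have hz : IB.symm (IB ((br a).dualMap x) + br a (IB x)) = 0 := by
        ext c
        have e1 : IB.symm (br a (IB x)) c = - x (br a c) := by
          rw [← hB, hP.antisymm a (IB x), map_neg, LinearMap.neg_apply,
            hb (IB x) a c, hB]
          simp
        simp [map_add, e1]
      rw [key]
      exact IB.symm.map_eq_zero_iff.mp hz
    · intro hinv a b c
      have h0x := congrArg (fun t => rPlus t (IB.symm a)) (hinv b)
      simp only [map_add, LinearMap.add_apply, map_zero, LinearMap.zero_apply,
        aux4_rPlus_map_left, aux4_rPlus_map_right, hr,
        LinearEquiv.apply_symm_apply] at h0x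
      have hab : br a b = IB ((br b).dualMap (IB.symm a)) := by
        rw [hP.antisymm a b, eq_comm]
        exact eq_neg_of_add_eq_zero_left h0x
      rw [hab, hB, IB.symm_apply_apply, hB]
      simp
  -- mul-invariance ↔ L-invariance
  have h3 : (∀ a b c, B (mul a b) c = B a (mul b c)) ↔
      (∀ a : A, TensorProduct.map (mul a) LinearMap.id rB
        - TensorProduct.map LinearMap.id (mul a) rB = 0) := by
    constructor
    · intro hm a
      apply aux4_rPlus_injective
      rw [map_zero]
      ext x
      rw [LinearMap.zero_apply]
      have key : rPlus (TensorProduct.map (mul a) LinearMap.id rB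
          - TensorProduct.map LinearMap.id (mul a) rB) x
          = IB ((mul a).dualMap x) - mul a (IB x) := by
        simp [aux4_rPlus_map_left, aux4_rPlus_map_right, hr]
      have hz : IB.symm (IB ((mul a).dualMap x) - mul a (IB x)) = 0 := by
        ext c
        have e1 : IB.symm (mul a (IB x)) c = x (mul a c) := by
          rw [← hB, hP.comm a (IB x), hm (IB x) a c, hB]
          simp
        simp [map_sub, e1]
      rw [key]
      exact IB.symm.map_eq_zero_iff.mp hz
    · intro hinv a b c
      have h0x := congrArg (fun t => rPlus t (IB.symm a)) (hinv b)
      simp only [map_sub, LinearMap.sub_apply, map_zero, LinearMap.zero_apply,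
        aux4_rPlus_map_left, aux4_rPlus_map_right, hr,
        LinearEquiv.apply_symm_apply] at h0x
      have hab : mul a b = IB ((mul b).dualMap (IB.symm a)) := by
        rw [hP.comm a b, eq_comm]
        exact sub_eq_zero.mp h0x
      rw [hab, hB, IB.symm_apply_apply, hB]
      simp
  constructor
  · rintro ⟨hs, hb, hm⟩
    exact ⟨h1.mp hs, fun a => ⟨(h2.mp hb) a, (h3.mp hm) a⟩⟩
  · rintro ⟨ht, hinv⟩
    exact ⟨h1.mpr ht, h2.mpr (fun a => (hinv a).1), h3.mpr (fun a => (hinv a).2)⟩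
end

section
/- Let (A,[·,·],·) be a finite-dimensional Poisson algebra over a field and r ∈ A⊗A with symmetric part S, and suppose S is (ad,L)-invariant. Define [x*,y*]_r = −ad*(r₊(x*))y* + ad*(r₋(y*))x* and x*·_r y* = L*(r₊(x*))y* + L*(r₋(y*))x* on A*. Then r is a solution of the Poisson Yang–Baxter equation in (A,[·,·],·) if and only if (A*,[·,·]_r,·_r) is a Poisson algebra and both r₊ and r₋ are Poisson algebra homomorphisms from (A*,[·,·]_r,·_r) to (A,[·,·],·). -/
open TensorProduct

section Aux
variable {k A : Type*} [Field k] [AddCommGroup A] [Module k A]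

noncomputable def pair2 (x y : Module.Dual k A) : (A ⊗[k] A) →ₗ[k] k :=
  TensorProduct.lift (x.smulRight y)

@[simp] lemma pair2_tmul (x y : Module.Dual k A) (a b : A) :
    pair2 x y (a ⊗ₜ[k] b) = x a * y b := by
  simp [pair2, smul_eq_mul]

noncomputable def trip (x y z : Module.Dual k A) : (A ⊗[k] (A ⊗[k] A)) →ₗ[k] k :=
  TensorProduct.lift (x.smulRight (pair2 y z))

@[simp] lemma trip_tmul (x y z : Module.Dual k A) (a b c : A) :
    trip x y z (a ⊗ₜ[k] (b ⊗ₜ[k] c)) = x a * (y b * z c) := by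
  simp [trip, smul_eq_mul]

lemma rPlus_pair (u : A ⊗[k] A) (x y : Module.Dual k A) :
    y (rPlus u x) = pair2 x y u := by
  induction u using TensorProduct.induction_on with
  | zero => simp
  | tmul a b => simp
  | add u v hu hv => simp [map_add, LinearMap.add_apply, hu, hv]

lemma pair2_tauT (u : A ⊗[k] A) (x y : Module.Dual k A) :
    pair2 x y (tauT u) = pair2 y x u := by
  induction u using TensorProduct.induction_on with
  | zero => simp
  | tmul a b => simp [tauT, mul_comm]
  | add u v hu hv => simp [map_add, hu, hv]

lemma pair2_map (f g : A →ₗ[k] A) (u : A ⊗[k] A) (x y : Module.Dual k A) :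
    pair2 x y (TensorProduct.map f g u) = pair2 (f.dualMap x) (g.dualMap y) u := by
  induction u using TensorProduct.induction_on with
  | zero => simp
  | tmul a b => simp
  | add u v hu hv => simp [map_add, hu, hv]

lemma rMinus_pair (u : A ⊗[k] A) (x y : Module.Dual k A) :
    y (rMinus u x) = - x (rPlus u y) := by
  have : rMinus u x = - rPlus (tauT u) x := by
    simp [rMinus]
  rw [this, map_neg, rPlus_pair, pair2_tauT, ← rPlus_pair]

lemma rPlus_dualMap_pair (u : A ⊗[k] A) (f : A →ₗ[k] A) (w z : Module.Dual k A) :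
    z (rPlus u (f.dualMap w)) = - w (f (rMinus u z)) := by
  induction u using TensorProduct.induction_on with
  | zero => simp
  | tmul a b =>
      have : rMinus (a ⊗ₜ[k] b) z = - z b • a := by
        simp [rMinus, tauT]
      simp [this, mul_comm]
  | add u v hu hv => simp [map_add, LinearMap.add_apply, hu, hv]; ring

end Aux
section Aux2
variable {k A : Type*} [Field k] [AddCommGroup A] [Module k A]

lemma dual_sep (a b : A) (h : ∀ z : Module.Dual k A, z a = z b) : a = b := by
  have h0 : ∀ z : Module.Dual k A, z (a - b) = 0 := by
    intro z; simp [map_sub, h z]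
  exact sub_eq_zero.mp ((Module.forall_dual_apply_eq_zero_iff k (a - b)).mp h0)

lemma trip_repr [FiniteDimensional k A] (t : A ⊗[k] (A ⊗[k] A))
    (i j l : Fin (Module.finrank k A)) :
    ((Module.finBasis k A).tensorProduct
      ((Module.finBasis k A).tensorProduct (Module.finBasis k A))).repr t (i, (j, l)) =
    trip ((Module.finBasis k A).coord i) ((Module.finBasis k A).coord j)
      ((Module.finBasis k A).coord l) t := by
  induction t using TensorProduct.induction_on with
  | zero => simp
  | tmul a w =>
      induction w using TensorProduct.induction_on with
      | zero => simp [tmul_zero]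
      | tmul b c =>
          simp [Module.Basis.tensorProduct_repr_tmul_apply, Module.Basis.coord_apply, smul_eq_mul]
          ring
      | add w1 w2 h1 h2 => simp [tmul_add, map_add, h1, h2]
  | add t1 t2 h1 h2 => simp [map_add, h1, h2]

lemma trip_inj [FiniteDimensional k A] (t : A ⊗[k] (A ⊗[k] A))
    (h : ∀ x y z : Module.Dual k A, trip x y z t = 0) : t = 0 := by
  classical
  set B := Module.finBasis k A
  set C := B.tensorProduct (B.tensorProduct B) with hC
  have : C.repr t = 0 := by
    ext p
    obtain ⟨i, j, l⟩ := p
    rw [hC, trip_repr t i j l, h]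
    simp
  simpa using (LinearEquiv.map_eq_zero_iff C.repr).mp this

end Aux2
section Aux3
variable {k A : Type*} [Field k] [AddCommGroup A] [Module k A]

lemma trip_T1323 (m : A →ₗ[k] A →ₗ[k] A) (u v : A ⊗[k] A) (x y z : Module.Dual k A) :
    trip x y z (T1323 m (u ⊗ₜ[k] v)) = z (m (rPlus u x) (rPlus v y)) := by
  induction u using TensorProduct.induction_on with
  | zero => simp [zero_tmul]
  | tmul a b =>
      induction v using TensorProduct.induction_on with
      | zero => simp [tmul_zero]
      | tmul c d =>
          simp only [T1323, LinearMap.comp_apply, LinearEquiv.coe_coe,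
            TensorProduct.tensorTensorTensorComm_tmul, TensorProduct.map_tmul,
            TensorProduct.assoc_tmul, TensorProduct.lift.tmul, LinearMap.id_coe, id_eq,
            trip_tmul, rPlus_tmul, map_smul, LinearMap.smul_apply, smul_eq_mul]
          ring
      | add v1 v2 h1 h2 =>
          simp only [tmul_add, map_add, LinearMap.add_apply, h1, h2]
  | add u1 u2 h1 h2 =>
      simp only [add_tmul, map_add, LinearMap.add_apply, h1, h2]

lemma trip_T1213 (m : A →ₗ[k] A →ₗ[k] A) (u v : A ⊗[k] A) (x y z : Module.Dual k A) :
    trip x y z (T1213 m (u ⊗ₜ[k] v)) = x (m (rMinus u y) (rMinus v z)) := by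
  induction u using TensorProduct.induction_on with
  | zero => simp [zero_tmul]
  | tmul a b =>
      induction v using TensorProduct.induction_on with
      | zero => simp [tmul_zero]
      | tmul c d =>
          simp only [T1213, rMinus, tauT, LinearMap.neg_apply, LinearMap.comp_apply,
            LinearEquiv.coe_coe, TensorProduct.comm_tmul,
            TensorProduct.tensorTensorTensorComm_tmul, TensorProduct.map_tmul,
            TensorProduct.assoc_tmul, TensorProduct.leftComm_tmul, TensorProduct.lift.tmul,
            LinearMap.id_coe, id_eq, trip_tmul, rPlus_tmul, map_smul, map_neg,
            LinearMap.smul_apply, smul_eq_mul, mul_neg, neg_mul, neg_neg, map_smulₛₗ]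
          ring
      | add v1 v2 h1 h2 =>
          simp only [tmul_add, map_add, LinearMap.add_apply, h1, h2]
  | add u1 u2 h1 h2 =>
      simp only [add_tmul, map_add, LinearMap.add_apply, h1, h2]

lemma trip_T1223 (m : A →ₗ[k] A →ₗ[k] A) (u v : A ⊗[k] A) (x y z : Module.Dual k A) :
    trip x y z (T1223 m (u ⊗ₜ[k] v)) = - y (m (rPlus u x) (rMinus v z)) := by
  induction u using TensorProduct.induction_on with
  | zero => simp [zero_tmul]
  | tmul a b =>
      induction v using TensorProduct.induction_on with
      | zero => simp [tmul_zero]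
      | tmul c d =>
          simp only [T1223, rMinus, tauT, LinearMap.neg_apply, LinearMap.comp_apply,
            LinearEquiv.coe_coe, TensorProduct.comm_tmul,
            TensorProduct.tensorTensorTensorComm_tmul, TensorProduct.map_tmul,
            TensorProduct.assoc_tmul, TensorProduct.leftComm_tmul, TensorProduct.lift.tmul,
            LinearMap.id_coe, id_eq, trip_tmul, rPlus_tmul, map_smul, map_neg,
            LinearMap.smul_apply, smul_eq_mul, mul_neg, neg_mul, neg_neg, map_smulₛₗ]
          ring
      | add v1 v2 h1 h2 =>
          simp only [tmul_add, map_add, LinearMap.add_apply, h1, h2]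
          ring
  | add u1 u2 h1 h2 =>
      simp only [add_tmul, map_add, LinearMap.add_apply, h1, h2]
      ring

lemma trip_T2312 (m : A →ₗ[k] A →ₗ[k] A) (u v : A ⊗[k] A) (x y z : Module.Dual k A) :
    trip x y z (T2312 m (u ⊗ₜ[k] v)) = - y (m (rMinus v z) (rPlus u x)) := by
  induction u using TensorProduct.induction_on with
  | zero => simp [zero_tmul]
  | tmul a b =>
      induction v using TensorProduct.induction_on with
      | zero => simp [tmul_zero]
      | tmul c d =>
          simp only [T2312, rMinus, tauT, LinearMap.neg_apply, LinearMap.comp_apply,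
            LinearEquiv.coe_coe, TensorProduct.comm_tmul,
            TensorProduct.tensorTensorTensorComm_tmul, TensorProduct.map_tmul,
            TensorProduct.assoc_tmul, TensorProduct.leftComm_tmul, TensorProduct.lift.tmul,
            LinearMap.id_coe, id_eq, trip_tmul, rPlus_tmul, map_smul, map_neg,
            LinearMap.smul_apply, smul_eq_mul, mul_neg, neg_mul, neg_neg, map_smulₛₗ]
          ring
      | add v1 v2 h1 h2 =>
          simp only [tmul_add, map_add, LinearMap.add_apply, h1, h2]
          ring
  | add u1 u2 h1 h2 =>
      simp only [add_tmul, map_add, LinearMap.add_apply, h1, h2]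
      ring

end Aux3
section Aux4
variable {k A : Type*} [Field k] [AddCommGroup A] [Module k A]

lemma trip_cybe (br : A →ₗ[k] A →ₗ[k] A) (r : A ⊗[k] A) (x y z : Module.Dual k A) :
    trip x y z (cybe br r) =
      x (br (rMinus r y) (rMinus r z)) + z (br (rPlus r x) (rPlus r y))
        - y (br (rPlus r x) (rMinus r z)) := by
  simp only [cybe, map_add, trip_T1213, trip_T1323, trip_T1223]
  ring

lemma trip_aybe (mul : A →ₗ[k] A →ₗ[k] A) (r : A ⊗[k] A) (x y z : Module.Dual k A) :
    trip x y z (aybe mul r) =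
      x (mul (rMinus r y) (rMinus r z)) + z (mul (rPlus r x) (rPlus r y))
        + y (mul (rMinus r z) (rPlus r x)) := by
  simp only [aybe, map_add, map_sub, trip_T1213, trip_T1323, trip_T2312]
  ring

lemma dualBr_apply (br : A →ₗ[k] A →ₗ[k] A) (r : A ⊗[k] A) (x y : Module.Dual k A)
    (c : A) :
    dualBr br r x y c = - y (br (rPlus r x) c) + x (br (rMinus r y) c) := by
  simp [dualBr]

lemma dualMul_apply (mul : A →ₗ[k] A →ₗ[k] A) (r : A ⊗[k] A) (x y : Module.Dual k A)
    (c : A) :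
    dualMul mul r x y c = y (mul (rPlus r x) c) + x (mul (rMinus r y) c) := by
  simp [dualMul]

lemma rPlus_dualBr (br : A →ₗ[k] A →ₗ[k] A) (r : A ⊗[k] A) (x y z : Module.Dual k A) :
    z (rPlus r (dualBr br r x y)) =
      y (br (rPlus r x) (rMinus r z)) - x (br (rMinus r y) (rMinus r z)) := by
  have : dualBr br r x y = - (br (rPlus r x)).dualMap y + (br (rMinus r y)).dualMap x := by
    rfl
  rw [this]
  simp only [map_add, map_neg, LinearMap.add_apply, LinearMap.neg_apply, map_neg,
    rPlus_dualMap_pair]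
  ring

lemma rPlus_dualMul (mul : A →ₗ[k] A →ₗ[k] A) (r : A ⊗[k] A) (x y z : Module.Dual k A) :
    z (rPlus r (dualMul mul r x y)) =
      - y (mul (rPlus r x) (rMinus r z)) - x (mul (rMinus r y) (rMinus r z)) := by
  have : dualMul mul r x y = (mul (rPlus r x)).dualMap y + (mul (rMinus r y)).dualMap x := by
    rfl
  rw [this]
  simp only [map_add, LinearMap.add_apply, rPlus_dualMap_pair]
  ring

lemma rMinus_dualBr (br : A →ₗ[k] A →ₗ[k] A) (r : A ⊗[k] A) (x y z : Module.Dual k A) :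
    z (rMinus r (dualBr br r x y)) =
      y (br (rPlus r x) (rPlus r z)) - x (br (rMinus r y) (rPlus r z)) := by
  rw [rMinus_pair]
  rw [dualBr_apply]
  ring

lemma rMinus_dualMul (mul : A →ₗ[k] A →ₗ[k] A) (r : A ⊗[k] A) (x y z : Module.Dual k A) :
    z (rMinus r (dualMul mul r x y)) =
      - y (mul (rPlus r x) (rPlus r z)) - x (mul (rMinus r y) (rPlus r z)) := by
  rw [rMinus_pair, dualMul_apply]
  ring

end Aux4
section Aux5
variable {k A : Type*} [Field k] [AddCommGroup A] [Module k A]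
variable {br mul : A →ₗ[k] A →ₗ[k] A} {S : A ⊗[k] A}

lemma pair2_symm (hS : tauT S = S) (x y : Module.Dual k A) :
    pair2 x y S = pair2 y x S := by
  conv_lhs => rw [← hS, pair2_tauT]

lemma inv_br_pair (hinv : IsAdLInvariant br mul S) (a : A) (x y : Module.Dual k A) :
    pair2 ((br a).dualMap x) y S + pair2 x ((br a).dualMap y) S = 0 := by
  have h := (hinv a).1
  have := congrArg (pair2 x y) h
  simpa [map_add, pair2_map] using this

lemma inv_mul_pair (hinv : IsAdLInvariant br mul S) (a : A) (x y : Module.Dual k A) :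
    pair2 ((mul a).dualMap x) y S = pair2 x ((mul a).dualMap y) S := by
  have h := (hinv a).2
  have := congrArg (pair2 x y) h
  simpa [map_sub, pair2_map, sub_eq_zero] using this

lemma keyT1 (hP : IsPoisson br mul) (hS : tauT S = S) (hinv : IsAdLInvariant br mul S)
    (x y : Module.Dual k A) (b : A) :
    y (br (rPlus S x) b) + x (br (rPlus S y) b) = 0 := by
  have e1 : y (br (rPlus S x) b) = - pair2 x ((br b).dualMap y) S := by
    calc y (br (rPlus S x) b) = - y (br b (rPlus S x)) := by
          rw [hP.antisymm (rPlus S x) b]; simp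
      _ = - ((br b).dualMap y) (rPlus S x) := rfl
      _ = - pair2 x ((br b).dualMap y) S := by rw [rPlus_pair]
  have e2 : x (br (rPlus S y) b) = - pair2 ((br b).dualMap x) y S := by
    calc x (br (rPlus S y) b) = - x (br b (rPlus S y)) := by
          rw [hP.antisymm (rPlus S y) b]; simp
      _ = - ((br b).dualMap x) (rPlus S y) := rfl
      _ = - pair2 y ((br b).dualMap x) S := by rw [rPlus_pair]
      _ = - pair2 ((br b).dualMap x) y S := by rw [pair2_symm hS]
  rw [e1, e2]
  linear_combination - inv_br_pair hinv b x y

lemma keyT2 (hP : IsPoisson br mul) (hS : tauT S = S) (hinv : IsAdLInvariant br mul S)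
    (x y : Module.Dual k A) (b : A) :
    y (mul (rPlus S x) b) = x (mul (rPlus S y) b) := by
  have e1 : y (mul (rPlus S x) b) = pair2 x ((mul b).dualMap y) S := by
    calc y (mul (rPlus S x) b) = y (mul b (rPlus S x)) := by rw [hP.comm]
      _ = ((mul b).dualMap y) (rPlus S x) := rfl
      _ = pair2 x ((mul b).dualMap y) S := by rw [rPlus_pair]
  have e2 : x (mul (rPlus S y) b) = pair2 ((mul b).dualMap x) y S := by
    calc x (mul (rPlus S y) b) = x (mul b (rPlus S y)) := by rw [hP.comm]
      _ = ((mul b).dualMap x) (rPlus S y) := rfl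
      _ = pair2 y ((mul b).dualMap x) S := by rw [rPlus_pair]
      _ = pair2 ((mul b).dualMap x) y S := by rw [pair2_symm hS]
  rw [e1, e2, inv_mul_pair hinv]

lemma keyInv1 (hP : IsPoisson br mul) (hS : tauT S = S) (hinv : IsAdLInvariant br mul S)
    (a : A) (x : Module.Dual k A) :
    rPlus S ((br a).dualMap x) = - br a (rPlus S x) := by
  apply dual_sep (k := k)
  intro w
  have h1 : w (rPlus S ((br a).dualMap x)) = pair2 ((br a).dualMap x) w S := rPlus_pair ..
  have h2 : w (br a (rPlus S x)) = pair2 x ((br a).dualMap w) S := by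
    calc w (br a (rPlus S x)) = ((br a).dualMap w) (rPlus S x) := rfl
      _ = pair2 x ((br a).dualMap w) S := by rw [rPlus_pair]
  rw [h1, map_neg, h2]
  linear_combination inv_br_pair hinv a x w

lemma keyMix1 (hP : IsPoisson br mul) (hS : tauT S = S) (hinv : IsAdLInvariant br mul S)
    (x y : Module.Dual k A) (c b : A) :
    y (br (br c (rPlus S x)) b) = x (br c (br (rPlus S y) b)) := by
  have h : br c (rPlus S x) = - rPlus S ((br c).dualMap x) := by
    rw [keyInv1 hP hS hinv]; simp
  rw [h]
  have := keyT1 hP hS hinv ((br c).dualMap x) y b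
  have h2 : ((br c).dualMap x) (br (rPlus S y) b) = x (br c (br (rPlus S y) b)) := rfl
  simp only [map_neg, LinearMap.neg_apply]
  linear_combination - this + h2

lemma keyMix2 (hP : IsPoisson br mul) (hS : tauT S = S) (hinv : IsAdLInvariant br mul S)
    (x y : Module.Dual k A) (c b : A) :
    y (mul (br c (rPlus S x)) b) = - x (br c (mul (rPlus S y) b)) := by
  have h : br c (rPlus S x) = - rPlus S ((br c).dualMap x) := by
    rw [keyInv1 hP hS hinv]; simp
  rw [h]
  have := keyT2 hP hS hinv ((br c).dualMap x) y b
  have h2 : ((br c).dualMap x) (mul (rPlus S y) b) = x (br c (mul (rPlus S y) b)) := rfl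
  simp only [map_neg, LinearMap.neg_apply]
  linear_combination - this - h2

end Aux5
section Aux6
variable {k A : Type*} [Field k] [AddCommGroup A] [Module k A]
variable {br mul : A →ₗ[k] A →ₗ[k] A} {r S Lam : A ⊗[k] A}

lemma hPdec (hdec : r = S + Lam) (u : Module.Dual k A) :
    rPlus r u = rPlus S u + rPlus Lam u := by
  rw [hdec]; simp [map_add]

lemma hMdec (hdec : r = S + Lam) (hS : tauT S = S) (hLam : tauT Lam = - Lam)
    (u : Module.Dual k A) :
    rMinus r u = rPlus Lam u - rPlus S u := by
  have : rMinus r u = - rPlus (tauT r) u := by simp [rMinus]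
  rw [this, hdec, map_add, hS, hLam]
  simp [map_add, map_neg]
  abel

variable (hP : IsPoisson br mul) (hdec : r = S + Lam) (hS : tauT S = S)
  (hLam : tauT Lam = - Lam) (hinv : IsAdLInvariant br mul S)

include hP hdec hS hLam hinv

lemma keyPM1 (x y : Module.Dual k A) (b : A) :
    y (br (rPlus r x) b) - y (br (rMinus r x) b)
      + x (br (rPlus r y) b) - x (br (rMinus r y) b) = 0 := by
  rw [hPdec hdec x, hPdec hdec y, hMdec hdec hS hLam x, hMdec hdec hS hLam y]
  simp only [map_add, map_sub, LinearMap.add_apply, LinearMap.sub_apply]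
  linear_combination 2 * keyT1 hP hS hinv x y b

lemma keyPM2 (x y : Module.Dual k A) (b : A) :
    y (mul (rPlus r x) b) - y (mul (rMinus r x) b)
      = x (mul (rPlus r y) b) - x (mul (rMinus r y) b) := by
  rw [hPdec hdec x, hPdec hdec y, hMdec hdec hS hLam x, hMdec hdec hS hLam y]
  simp only [map_add, map_sub, LinearMap.add_apply, LinearMap.sub_apply]
  linear_combination 2 * keyT2 hP hS hinv x y b

lemma keyPMmix1 (x y : Module.Dual k A) (c b : A) :
    y (br (br c (rPlus r x)) b) - y (br (br c (rMinus r x)) b)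
      = x (br c (br (rPlus r y) b)) - x (br c (br (rMinus r y) b)) := by
  rw [hPdec hdec x, hPdec hdec y, hMdec hdec hS hLam x, hMdec hdec hS hLam y]
  simp only [map_add, map_sub, LinearMap.add_apply, LinearMap.sub_apply]
  linear_combination 2 * keyMix1 hP hS hinv x y c b

lemma keyPMmix2 (x y : Module.Dual k A) (c b : A) :
    y (mul (br c (rPlus r x)) b) - y (mul (br c (rMinus r x)) b)
      = - x (br c (mul (rPlus r y) b)) + x (br c (mul (rMinus r y) b)) := by
  rw [hPdec hdec x, hPdec hdec y, hMdec hdec hS hLam x, hMdec hdec hS hLam y]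
  simp only [map_add, map_sub, LinearMap.add_apply, LinearMap.sub_apply]
  linear_combination 2 * keyMix2 hP hS hinv x y c b

end Aux6
section Aux7
variable {k A : Type*} [Field k] [AddCommGroup A] [Module k A]
variable {br mul : A →ₗ[k] A →ₗ[k] A} {r S Lam : A ⊗[k] A}

lemma bridge1 (x y z : Module.Dual k A) :
    trip x y z (cybe br r) =
      z (br (rPlus r x) (rPlus r y)) - z (rPlus r (dualBr br r x y)) := by
  rw [trip_cybe, rPlus_dualBr]
  ring

lemma bridge2 (hP : IsPoisson br mul) (x y z : Module.Dual k A) :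
    trip x y z (aybe mul r) =
      z (mul (rPlus r x) (rPlus r y)) - z (rPlus r (dualMul mul r x y)) := by
  rw [trip_aybe, rPlus_dualMul]
  have c1 : y (mul (rMinus r z) (rPlus r x)) = y (mul (rPlus r x) (rMinus r z)) := by
    rw [hP.comm]
  linear_combination c1

variable (hP : IsPoisson br mul) (hdec : r = S + Lam) (hS : tauT S = S)
  (hLam : tauT Lam = - Lam) (hinv : IsAdLInvariant br mul S)

include hP hdec hS hLam hinv

lemma bridge3 (x y z : Module.Dual k A) :
    - trip z y x (cybe br r) =
      z (br (rMinus r x) (rMinus r y)) - z (rMinus r (dualBr br r x y)) := by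
  rw [trip_cybe, rMinus_dualBr]
  have a1 : z (br (rMinus r y) (rMinus r x)) = - z (br (rMinus r x) (rMinus r y)) := by
    rw [hP.antisymm]; simp
  have a2 : x (br (rPlus r z) (rPlus r y)) = - x (br (rPlus r y) (rPlus r z)) := by
    rw [hP.antisymm]; simp
  have a3 : y (br (rPlus r z) (rMinus r x)) = - y (br (rMinus r x) (rPlus r z)) := by
    rw [hP.antisymm]; simp
  linear_combination - a1 - a2 + a3 + keyPM1 hP hdec hS hLam hinv x y (rPlus r z)

lemma bridge4 (x y z : Module.Dual k A) :
    trip z y x (aybe mul r) =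
      z (mul (rMinus r x) (rMinus r y)) - z (rMinus r (dualMul mul r x y)) := by
  rw [trip_aybe, rMinus_dualMul]
  have c1 : z (mul (rMinus r y) (rMinus r x)) = z (mul (rMinus r x) (rMinus r y)) := by
    rw [hP.comm]
  have c2 : x (mul (rPlus r z) (rPlus r y)) = x (mul (rPlus r y) (rPlus r z)) := by
    rw [hP.comm]
  have c3 : y (mul (rMinus r x) (rPlus r z)) = y (mul (rPlus r z) (rMinus r x)) := by
    rw [hP.comm]
  linear_combination c1 + c2 - keyPM2 hP hdec hS hLam hinv x y (rPlus r z)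

end Aux7
section Aux8
variable {k A : Type*} [Field k] [AddCommGroup A] [Module k A]
variable {br mul : A →ₗ[k] A →ₗ[k] A} {r S Lam : A ⊗[k] A}

variable (hP : IsPoisson br mul) (hdec : r = S + Lam) (hS : tauT S = S)
  (hLam : tauT Lam = - Lam) (hinv : IsAdLInvariant br mul S)

include hP hdec hS hLam hinv

lemma dual_antisymm (x y : Module.Dual k A) :
    dualBr br r x y = - dualBr br r y x := by
  ext b
  simp only [dualBr_apply, LinearMap.neg_apply]
  linear_combination - keyPM1 hP hdec hS hLam hinv x y b

lemma dual_comm (x y : Module.Dual k A) :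
    dualMul mul r x y = dualMul mul r y x := by
  ext b
  simp only [dualMul_apply]
  linear_combination keyPM2 hP hdec hS hLam hinv x y b

lemma dual_jacobi
    (Hbp : ∀ x y : Module.Dual k A,
      rPlus r (dualBr br r x y) = br (rPlus r x) (rPlus r y))
    (Hbm : ∀ x y : Module.Dual k A,
      rMinus r (dualBr br r x y) = br (rMinus r x) (rMinus r y))
    (x y z : Module.Dual k A) :
    dualBr br r x (dualBr br r y z) =
      dualBr br r (dualBr br r x y) z + dualBr br r y (dualBr br r x z) := by
  ext b
  simp only [LinearMap.add_apply, dualBr_apply, Hbp, Hbm, map_add, map_neg, map_sub,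
    LinearMap.neg_apply, LinearMap.sub_apply]
  have jz : z (br (rPlus r x) (br (rPlus r y) b)) =
      z (br (br (rPlus r x) (rPlus r y)) b) + z (br (rPlus r y) (br (rPlus r x) b)) := by
    rw [hP.jacobi]; simp
  have jy : y (br (rPlus r x) (br (rMinus r z) b)) =
      y (br (br (rPlus r x) (rMinus r z)) b) + y (br (rMinus r z) (br (rPlus r x) b)) := by
    rw [hP.jacobi]; simp
  have jx : x (br (rMinus r y) (br (rMinus r z) b)) =
      x (br (br (rMinus r y) (rMinus r z)) b) + x (br (rMinus r z) (br (rMinus r y) b)) := by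
    rw [hP.jacobi]; simp
  have a1 : y (br (br (rPlus r x) (rMinus r z)) b) =
      - y (br (br (rMinus r z) (rPlus r x)) b) := by
    rw [hP.antisymm (rPlus r x) (rMinus r z)]; simp
  have a2 : y (br (br (rMinus r x) (rMinus r z)) b) =
      - y (br (br (rMinus r z) (rMinus r x)) b) := by
    rw [hP.antisymm (rMinus r x) (rMinus r z)]; simp
  have mix := keyPMmix1 hP hdec hS hLam hinv x y (rMinus r z) b
  linear_combination - jz + jy - jx + a1 - a2 - mix

lemma dual_leibniz
    (Hbp : ∀ x y : Module.Dual k A,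
      rPlus r (dualBr br r x y) = br (rPlus r x) (rPlus r y))
    (Hbm : ∀ x y : Module.Dual k A,
      rMinus r (dualBr br r x y) = br (rMinus r x) (rMinus r y))
    (Hmm : ∀ x y : Module.Dual k A,
      rMinus r (dualMul mul r x y) = mul (rMinus r x) (rMinus r y))
    (x y z : Module.Dual k A) :
    dualBr br r x (dualMul mul r y z) =
      dualMul mul r (dualBr br r x y) z + dualMul mul r y (dualBr br r x z) := by
  ext b
  simp only [LinearMap.add_apply, dualBr_apply, dualMul_apply, Hbp, Hbm, Hmm, map_add,
    map_neg, map_sub, LinearMap.neg_apply, LinearMap.sub_apply]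
  have lz : z (br (rPlus r x) (mul (rPlus r y) b)) =
      z (mul (br (rPlus r x) (rPlus r y)) b) + z (mul (rPlus r y) (br (rPlus r x) b)) := by
    rw [hP.leibniz]; simp
  have ly : y (br (rPlus r x) (mul (rMinus r z) b)) =
      y (mul (br (rPlus r x) (rMinus r z)) b) + y (mul (rMinus r z) (br (rPlus r x) b)) := by
    rw [hP.leibniz]; simp
  have lx : x (br (rMinus r y) (mul (rMinus r z) b)) =
      x (mul (br (rMinus r y) (rMinus r z)) b) + x (mul (rMinus r z) (br (rMinus r y) b)) := by
    rw [hP.leibniz]; simp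
  have aw1 : y (mul (br (rPlus r x) (rMinus r z)) b) =
      - y (mul (br (rMinus r z) (rPlus r x)) b) := by
    rw [hP.antisymm (rPlus r x) (rMinus r z)]; simp
  have aw2 : y (mul (br (rMinus r x) (rMinus r z)) b) =
      - y (mul (br (rMinus r z) (rMinus r x)) b) := by
    rw [hP.antisymm (rMinus r x) (rMinus r z)]; simp
  have mix2 := keyPMmix2 hP hdec hS hLam hinv x y (rMinus r z) b
  have e1 : x (br (mul (rMinus r y) (rMinus r z)) b) =
      - x (br b (mul (rMinus r y) (rMinus r z))) := by
    rw [hP.antisymm (mul (rMinus r y) (rMinus r z)) b]; simp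
  have e2 : x (br b (mul (rMinus r y) (rMinus r z))) =
      x (mul (br b (rMinus r y)) (rMinus r z)) + x (mul (rMinus r y) (br b (rMinus r z))) := by
    rw [hP.leibniz]; simp
  have e3 : x (mul (br b (rMinus r y)) (rMinus r z)) =
      - x (mul (br (rMinus r y) b) (rMinus r z)) := by
    rw [hP.antisymm b (rMinus r y)]; simp
  have e4 : x (mul (rMinus r y) (br b (rMinus r z))) =
      - x (mul (rMinus r y) (br (rMinus r z) b)) := by
    rw [hP.antisymm b (rMinus r z)]; simp
  have e5 : x (mul (br (rMinus r y) b) (rMinus r z)) =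
      x (mul (rMinus r z) (br (rMinus r y) b)) := by
    rw [hP.comm]
  have e6 : x (br (rMinus r z) (mul (rMinus r y) b)) =
      x (mul (br (rMinus r z) (rMinus r y)) b) + x (mul (rMinus r y) (br (rMinus r z) b)) := by
    rw [hP.leibniz]; simp
  have e7 : x (mul (br (rMinus r y) (rMinus r z)) b) =
      - x (mul (br (rMinus r z) (rMinus r y)) b) := by
    rw [hP.antisymm (rMinus r y) (rMinus r z)]; simp
  linear_combination lz + ly - lx + aw1 - aw2 - mix2 + e1 - e2 - e3 - e4 + e5 - e6 - e7

lemma dual_assoc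
    (Hmp : ∀ x y : Module.Dual k A,
      rPlus r (dualMul mul r x y) = mul (rPlus r x) (rPlus r y))
    (Hmm : ∀ x y : Module.Dual k A,
      rMinus r (dualMul mul r x y) = mul (rMinus r x) (rMinus r y))
    (x y z : Module.Dual k A) :
    dualMul mul r (dualMul mul r x y) z = dualMul mul r x (dualMul mul r y z) := by
  ext b
  simp only [LinearMap.add_apply, dualMul_apply, Hmp, Hmm, map_add, map_neg, map_sub,
    LinearMap.neg_apply, LinearMap.sub_apply]
  have za : z (mul (rPlus r y) (mul (rPlus r x) b)) =
      z (mul (mul (rPlus r y) (rPlus r x)) b) := by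
    rw [hP.assoc]
  have zb : z (mul (mul (rPlus r y) (rPlus r x)) b) =
      z (mul (mul (rPlus r x) (rPlus r y)) b) := by
    rw [hP.comm (rPlus r y) (rPlus r x)]
  have ya : y (mul (rMinus r z) (mul (rPlus r x) b)) =
      y (mul (mul (rMinus r z) (rPlus r x)) b) := by
    rw [hP.assoc]
  have yb : y (mul (rPlus r x) (mul (rMinus r z) b)) =
      y (mul (mul (rPlus r x) (rMinus r z)) b) := by
    rw [hP.assoc]
  have yc : y (mul (mul (rPlus r x) (rMinus r z)) b) =
      y (mul (mul (rMinus r z) (rPlus r x)) b) := by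
    rw [hP.comm (rPlus r x) (rMinus r z)]
  have xa : x (mul (rMinus r y) (mul (rMinus r z) b)) =
      x (mul (mul (rMinus r y) (rMinus r z)) b) := by
    rw [hP.assoc]
  linear_combination - za - zb + yb + yc - ya + xa

end Aux8

/-- if the symmetric part of `r` is `(ad, L)`-invariant, then `r` solves the
Poisson Yang–Baxter equation iff `(A*, [,]_r, ·_r)` is a Poisson algebra and both `r₊, r₋`
are Poisson algebra homomorphisms. -/
theorem statement5 {k A : Type*} [Field k] [AddCommGroup A] [Module k A]
    [FiniteDimensional k A]
    (br mul : A →ₗ[k] A →ₗ[k] A) (hP : IsPoisson br mul)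
    (r S Lam : A ⊗[k] A) (hdec : r = S + Lam) (hS : tauT S = S) (hLam : tauT Lam = - Lam)
    (hinv : IsAdLInvariant br mul S) :
    IsPYBESolution br mul r ↔
      (IsPoisson (dualBr br r) (dualMul mul r) ∧
        (∀ x y : Module.Dual k A,
          rPlus r (dualBr br r x y) = br (rPlus r x) (rPlus r y)) ∧
        (∀ x y : Module.Dual k A,
          rPlus r (dualMul mul r x y) = mul (rPlus r x) (rPlus r y)) ∧
        (∀ x y : Module.Dual k A,
          rMinus r (dualBr br r x y) = br (rMinus r x) (rMinus r y)) ∧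
        (∀ x y : Module.Dual k A,
          rMinus r (dualMul mul r x y) = mul (rMinus r x) (rMinus r y))) := by
  constructor
  · rintro ⟨hc, ha⟩
    have Hbp : ∀ x y : Module.Dual k A,
        rPlus r (dualBr br r x y) = br (rPlus r x) (rPlus r y) := by
      intro x y
      apply dual_sep (k := k)
      intro z
      have h := bridge1 (br := br) (r := r) x y z
      rw [hc, map_zero] at h
      linear_combination h
    have Hmp : ∀ x y : Module.Dual k A,
        rPlus r (dualMul mul r x y) = mul (rPlus r x) (rPlus r y) := by
      intro x y
      apply dual_sep (k := k)
      intro z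
      have h := bridge2 (r := r) hP x y z
      rw [ha, map_zero] at h
      linear_combination h
    have Hbm : ∀ x y : Module.Dual k A,
        rMinus r (dualBr br r x y) = br (rMinus r x) (rMinus r y) := by
      intro x y
      apply dual_sep (k := k)
      intro z
      have h := bridge3 hP hdec hS hLam hinv x y z
      rw [hc, map_zero, neg_zero] at h
      linear_combination h
    have Hmm : ∀ x y : Module.Dual k A,
        rMinus r (dualMul mul r x y) = mul (rMinus r x) (rMinus r y) := by
      intro x y
      apply dual_sep (k := k)
      intro z
      have h := bridge4 hP hdec hS hLam hinv x y z
      rw [ha, map_zero] at h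
      linear_combination h
    refine ⟨⟨dual_antisymm hP hdec hS hLam hinv,
      dual_jacobi hP hdec hS hLam hinv Hbp Hbm,
      dual_comm hP hdec hS hLam hinv,
      dual_assoc hP hdec hS hLam hinv Hmp Hmm,
      dual_leibniz hP hdec hS hLam hinv Hbp Hbm Hmm⟩, Hbp, Hmp, Hbm, Hmm⟩
  · rintro ⟨hPo, Hbp, Hmp, Hbm, Hmm⟩
    constructor
    · apply trip_inj
      intro x y z
      rw [bridge1, Hbp x y, sub_self]
    · apply trip_inj
      intro x y z
      rw [bridge2 hP, Hmp x y, sub_self]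
end

section
/- Let (A,[·,·]_A,·_A) and (A*,[·,·]_{A*},·_{A*}) be finite-dimensional Poisson algebras such that the operations on 𝔄 = A ⊕ A* defined by [(a,x*),(b,y*)]_𝔄 = ([a,b]_A − ad*_{[,]_{A*}}(x*)b + ad*_{[,]_{A*}}(y*)a, [x*,y*]_{A*} − ad*_{[,]_A}(a)y* + ad*_{[,]_A}(b)x*) and (a,x*)·_𝔄(b,y*) = (a·_A b + L*_{·_{A*}}(x*)b + L*_{·_{A*}}(y*)a, x*·_{A*}y* + L*_{·_A}(a)y* + L*_{·_A}(b)x*) make (𝔄,[·,·]_𝔄,·_𝔄) a Poisson algebra (the Drinfeld classical double). Let {e₁,…,eₙ} be a basis of A, {e₁*,…,eₙ*} the dual basis of A*, and r = Σᵢ eᵢ⊗eᵢ* ∈ 𝔄⊗𝔄. Then the symmetric part S = ½Σᵢ(eᵢ⊗eᵢ* + eᵢ*⊗eᵢ) of r is (ad,L)-invariant in (𝔄,[·,·]_𝔄,·_𝔄), and the map I_r = r₊ − r₋: 𝔄* → 𝔄, which sends (x*,a) ↦ (a,x*), is a linear isomorphism. -/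
open TensorProduct

variable {k A : Type*} [Field k] [AddCommGroup A] [Module k A]

/-- The bracket of the Drinfeld classical double on `𝔄 = A ⊕ A*`:
`[(a,x*),(b,y*)] = ([a,b] − ad*_{A*}(x*)b + ad*_{A*}(y*)a,
[x*,y*]_{A*} − ad*_A(a)y* + ad*_A(b)x*)`, where `ad*_{A*}(x*)` acts on `A` through the
identification `A ≅ A**`. -/
noncomputable def dblBr [FiniteDimensional k A] (br : A →ₗ[k] A →ₗ[k] A)
    (brD : Module.Dual k A →ₗ[k] Module.Dual k A →ₗ[k] Module.Dual k A) :
    (A × Module.Dual k A) →ₗ[k] (A × Module.Dual k A) →ₗ[k] (A × Module.Dual k A) :=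
  LinearMap.mk₂ k
    (fun p q =>
      (br p.1 q.1
          - (Module.evalEquiv k A).symm ((brD p.2).dualMap (Module.evalEquiv k A q.1))
          + (Module.evalEquiv k A).symm ((brD q.2).dualMap (Module.evalEquiv k A p.1)),
        brD p.2 q.2 - (br p.1).dualMap q.2 + (br q.1).dualMap p.2))
    (fun p p' q => by simp [Prod.ext_iff, map_add]; constructor <;> abel)
    (fun c p q => by simp [Prod.ext_iff, map_smul, smul_add, smul_sub])
    (fun p q q' => by simp [Prod.ext_iff, map_add]; constructor <;> abel)
    (fun c p q => by simp [Prod.ext_iff, map_smul, smul_add, smul_sub])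

/-- The multiplication of the Drinfeld classical double on `𝔄 = A ⊕ A*`. -/
noncomputable def dblMul [FiniteDimensional k A] (mul : A →ₗ[k] A →ₗ[k] A)
    (mulD : Module.Dual k A →ₗ[k] Module.Dual k A →ₗ[k] Module.Dual k A) :
    (A × Module.Dual k A) →ₗ[k] (A × Module.Dual k A) →ₗ[k] (A × Module.Dual k A) :=
  LinearMap.mk₂ k
    (fun p q =>
      (mul p.1 q.1
          + (Module.evalEquiv k A).symm ((mulD p.2).dualMap (Module.evalEquiv k A q.1))
          + (Module.evalEquiv k A).symm ((mulD q.2).dualMap (Module.evalEquiv k A p.1)),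
        mulD p.2 q.2 + (mul p.1).dualMap q.2 + (mul q.1).dualMap p.2))
    (fun p p' q => by simp [Prod.ext_iff, map_add]; constructor <;> abel)
    (fun c p q => by simp [Prod.ext_iff, map_smul, smul_add])
    (fun p q q' => by simp [Prod.ext_iff, map_add]; constructor <;> abel)
    (fun c p q => by simp [Prod.ext_iff, map_smul, smul_add])

section Aux
variable {k A : Type*} [Field k] [AddCommGroup A] [Module k A]

@[simp] lemma rMinus_tmul {V : Type*} [AddCommGroup V] [Module k V]
    (a b : V) (f : Module.Dual k V) :
    rMinus (a ⊗ₜ[k] b) f = - (f b • a) := rfl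

lemma canon_map_eq {V : Type*} [AddCommGroup V] [Module k V] [FiniteDimensional k V]
    {κ : Type*} [Fintype κ] [DecidableEq κ] (b : Module.Basis κ k V) (T : V →ₗ[k] V) :
    TensorProduct.map T LinearMap.id (∑ j, b j ⊗ₜ[k] b.coord j) =
      TensorProduct.map LinearMap.id T.dualMap (∑ j, b j ⊗ₜ[k] b.coord j) := by
  apply ((TensorProduct.comm k V (Module.Dual k V)).trans
    (dualTensorHomEquivOfBasis (N := V) b)).injective
  simp only [map_sum, TensorProduct.map_tmul, LinearMap.id_coe, id_eq, LinearEquiv.trans_apply,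
    TensorProduct.comm_tmul, dualTensorHomEquivOfBasis_apply]
  ext x
  simp only [LinearMap.coe_sum, Finset.sum_apply, dualTensorHom_apply,
    LinearMap.dualMap_apply, Module.Basis.coord_apply]
  calc ∑ j, b.repr x j • T (b j) = T (∑ j, b.repr x j • b j) := by
        rw [map_sum]; simp
    _ = T x := by rw [Module.Basis.sum_repr]
    _ = ∑ j, b.repr (T x) j • b j := (Module.Basis.sum_repr b (T x)).symm

variable [FiniteDimensional k A]

/-- The canonical self-duality `A ⊕ A* ≅ (A ⊕ A*)*`. -/
noncomputable def phiD (k A : Type*) [Field k] [AddCommGroup A] [Module k A]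
    [FiniteDimensional k A] :
    (A × Module.Dual k A) ≃ₗ[k] Module.Dual k (A × Module.Dual k A) :=
  ((LinearEquiv.prodComm k A (Module.Dual k A)).trans
    ((LinearEquiv.refl k (Module.Dual k A)).prodCongr (Module.evalEquiv k A))).trans
    (Module.dualProdDualEquivDual k A (Module.Dual k A))

lemma phiD_apply (p q : A × Module.Dual k A) :
    phiD k A p q = p.2 q.1 + q.2 p.1 := by
  simp [phiD, Module.dualProdDualEquivDual]

lemma phiD_symmetric (p q : A × Module.Dual k A) : phiD k A p q = phiD k A q p := by
  simp [phiD_apply]; ring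

lemma map_eq_of_adjoint {κ : Type*} [Fintype κ] [DecidableEq κ] (b : Module.Basis κ k A)
    (T T' : (A × Module.Dual k A) →ₗ[k] (A × Module.Dual k A))
    (hadj : ∀ v w, phiD k A (T v) w = phiD k A v (T' w)) :
    TensorProduct.map T LinearMap.id
        (∑ i, (((b i, 0) : A × Module.Dual k A) ⊗ₜ[k] ((0, b.coord i) : A × Module.Dual k A)
          + ((0, b.coord i) : A × Module.Dual k A) ⊗ₜ[k] ((b i, 0) : A × Module.Dual k A))) =
      TensorProduct.map LinearMap.id T'
        (∑ i, (((b i, 0) : A × Module.Dual k A) ⊗ₜ[k] ((0, b.coord i) : A × Module.Dual k A)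
          + ((0, b.coord i) : A × Module.Dual k A) ⊗ₜ[k] ((b i, 0) : A × Module.Dual k A))) := by
  classical
  set bD : Module.Basis (κ ⊕ κ) k (A × Module.Dual k A) := b.prod b.dualBasis with hbD
  have hbl : ∀ i, bD (Sum.inl i) = ((b i, 0) : A × Module.Dual k A) := by
    intro i
    exact Prod.ext (Module.Basis.prod_apply_inl_fst _ _ _) (Module.Basis.prod_apply_inl_snd _ _ _)
  have hbr : ∀ i, bD (Sum.inr i) = ((0, b.coord i) : A × Module.Dual k A) := by
    intro i
    refine Prod.ext (Module.Basis.prod_apply_inr_fst _ _ _) ?_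
    rw [Module.Basis.prod_apply_inr_snd]
    simp [Module.Basis.coe_dualBasis]
  have h1 : ∀ i, (phiD k A ((0, b.coord i) : A × Module.Dual k A) : Module.Dual k _)
      = bD.coord (Sum.inl i) := by
    intro i; refine LinearMap.ext fun w => ?_
    simp [phiD_apply, Module.Basis.coord_apply, Module.Basis.prod_repr_inl, hbD]
  have h2 : ∀ i, (phiD k A ((b i, 0) : A × Module.Dual k A) : Module.Dual k _)
      = bD.coord (Sum.inr i) := by
    intro i; refine LinearMap.ext fun w => ?_
    simp [phiD_apply, Module.Basis.coord_apply, Module.Basis.prod_repr_inr, hbD]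
  have htd : ∀ v, T.dualMap (phiD k A v) = phiD k A (T' v) := by
    intro v; refine LinearMap.ext fun w => ?_
    rw [LinearMap.dualMap_apply, phiD_symmetric, hadj, phiD_symmetric]
  have hc := canon_map_eq bD T
  simp only [Fintype.sum_sum_type, map_add, map_sum, TensorProduct.map_tmul,
    LinearMap.id_coe, id_eq, hbl, hbr] at hc
  apply (TensorProduct.congr (LinearEquiv.refl k (A × Module.Dual k A)) (phiD k A)).injective
  simp only [map_sum, map_add, TensorProduct.map_tmul, TensorProduct.congr_tmul,
    LinearEquiv.refl_apply, LinearMap.id_coe, id_eq, ← htd, h1, h2]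
  rw [Finset.sum_add_distrib, Finset.sum_add_distrib]
  exact hc


lemma adj_dblBr (br : A →ₗ[k] A →ₗ[k] A)
    (hA : ∀ a b, br a b = - br b a)
    (brD : Module.Dual k A →ₗ[k] Module.Dual k A →ₗ[k] Module.Dual k A)
    (hD : ∀ x y, brD x y = - brD y x)
    (u v w : A × Module.Dual k A) :
    phiD k A (dblBr br brD u v) w = phiD k A v ((-(dblBr br brD u)) w) := by
  obtain ⟨a, x⟩ := u; obtain ⟨b, y⟩ := v; obtain ⟨c, z⟩ := w
  simp only [dblBr, LinearMap.mk₂_apply, phiD_apply, LinearMap.neg_apply, Prod.fst, Prod.snd,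
    LinearMap.sub_apply, LinearMap.add_apply, map_sub, map_add, LinearMap.dualMap_apply,
    Module.apply_evalEquiv_symm_apply, Module.evalEquiv_apply, Module.Dual.eval_apply,
    Prod.fst_neg, Prod.snd_neg, LinearMap.neg_apply, map_neg]
  rw [hD y z, hA b c]
  simp only [map_neg, LinearMap.neg_apply]
  ring

lemma adj_dblMul (mul : A →ₗ[k] A →ₗ[k] A)
    (hA : ∀ a b, mul a b = mul b a)
    (mulD : Module.Dual k A →ₗ[k] Module.Dual k A →ₗ[k] Module.Dual k A)
    (hD : ∀ x y, mulD x y = mulD y x)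
    (u v w : A × Module.Dual k A) :
    phiD k A (dblMul mul mulD u v) w = phiD k A v (dblMul mul mulD u w) := by
  obtain ⟨a, x⟩ := u; obtain ⟨b, y⟩ := v; obtain ⟨c, z⟩ := w
  simp only [dblMul, LinearMap.mk₂_apply, phiD_apply, Prod.fst, Prod.snd,
    LinearMap.add_apply, map_add, LinearMap.dualMap_apply,
    Module.apply_evalEquiv_symm_apply, Module.evalEquiv_apply, Module.Dual.eval_apply]
  rw [hD y z, hA b c]
  ring

end Aux

/-- for the Drinfeld classical double `𝔄 = A ⊕ A*` of a Poisson bialgebra and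
`r = Σᵢ eᵢ ⊗ eᵢ*`, the symmetric part `S = ½ Σᵢ (eᵢ ⊗ eᵢ* + eᵢ* ⊗ eᵢ)` of `r` is
`(ad, L)`-invariant in `𝔄`, and `I_r = r₊ − r₋ : 𝔄* → 𝔄`, `(x*, a) ↦ (a, x*)`, is a linear
isomorphism. -/
theorem statement9 [FiniteDimensional k A]
    (br mul : A →ₗ[k] A →ₗ[k] A) (hPA : IsPoisson br mul)
    (brD mulD : Module.Dual k A →ₗ[k] Module.Dual k A →ₗ[k] Module.Dual k A)
    (hPD : IsPoisson brD mulD)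
    (hDouble : IsPoisson (dblBr br brD) (dblMul mul mulD))
    (ι : Type*) [Fintype ι] [DecidableEq ι] (bA : Module.Basis ι k A)
    (r : (A × Module.Dual k A) ⊗[k] (A × Module.Dual k A))
    (hrdef : r = ∑ i : ι,
      (((bA i, 0) : A × Module.Dual k A) ⊗ₜ[k] ((0, bA.coord i) : A × Module.Dual k A)))
    (S : (A × Module.Dual k A) ⊗[k] (A × Module.Dual k A))
    (hSdef : S = (2 : k)⁻¹ • ∑ i : ι,
      ((((bA i, 0) : A × Module.Dual k A) ⊗ₜ[k] ((0, bA.coord i) : A × Module.Dual k A))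
        + (((0, bA.coord i) : A × Module.Dual k A) ⊗ₜ[k] ((bA i, 0) : A × Module.Dual k A)))) :
    IsAdLInvariant (dblBr br brD) (dblMul mul mulD) S ∧
    (∀ (x : Module.Dual k A) (a : A),
      (rPlus r - rMinus r)
        ((Module.dualProdDualEquivDual k A (Module.Dual k A))
          (x, Module.Dual.eval k A a)) = (a, x)) ∧
    Function.Bijective (rPlus r - rMinus r) := by
  classical
  have hpart2 : ∀ (x : Module.Dual k A) (a : A),
      (rPlus r - rMinus r)
        ((Module.dualProdDualEquivDual k A (Module.Dual k A))
          (x, Module.Dual.eval k A a)) = (a, x) := by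
    intro x a
    rw [hrdef, LinearMap.sub_apply]
    simp only [map_sum, LinearMap.sum_apply, rPlus_tmul, rMinus_tmul,
      Module.dualProdDualEquivDual_apply, LinearMap.coprod_apply, map_zero,
      Module.Dual.eval_apply, zero_add, add_zero, Prod.smul_mk, smul_zero,
      LinearMap.zero_apply, sub_neg_eq_add, smul_neg, Finset.sum_neg_distrib]
    refine Prod.ext ?_ ?_
    · simpa [Prod.fst_sum, Module.Basis.coord_apply] using bA.sum_repr a
    · simpa [Prod.snd_sum] using Module.Basis.sum_dual_apply_smul_coord bA x
  refine ⟨?_, hpart2, ?_⟩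
  · -- (ad, L)-invariance of S
    intro u
    subst hSdef
    constructor
    · rw [map_smul, map_smul, ← smul_add,
        map_eq_of_adjoint bA (dblBr br brD u) (-(dblBr br brD u))
          (adj_dblBr br hPA.antisymm brD hPD.antisymm u)]
      have h0 : TensorProduct.map (LinearMap.id (M := A × Module.Dual k A))
            (-(dblBr br brD u)) + TensorProduct.map LinearMap.id (dblBr br brD u) = 0 := by
        have hz : -(dblBr br brD u) + dblBr br brD u = 0 := by
          ext v <;> simp
        rw [← TensorProduct.map_add_right, hz, TensorProduct.map_zero_right]
      rw [← LinearMap.add_apply, h0]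
      simp
    · rw [map_smul, map_smul,
        map_eq_of_adjoint bA (dblMul mul mulD u) (dblMul mul mulD u)
          (adj_dblMul mul hPA.comm mulD hPD.comm u), sub_self]
  · -- bijectivity
    set E := ((Module.dualProdDualEquivDual k A (Module.Dual k A)).symm.trans
        ((LinearEquiv.refl k (Module.Dual k A)).prodCongr (Module.evalEquiv k A).symm)).trans
      (LinearEquiv.prodComm k (Module.Dual k A) A) with hE
    have heq : (rPlus r - rMinus r) = E.toLinearMap := by
      refine LinearMap.ext fun ξ => ?_
      obtain ⟨⟨x, g⟩, hp⟩ :=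
        (Module.dualProdDualEquivDual k A (Module.Dual k A)).surjective ξ
      obtain ⟨a, ha⟩ := (Module.evalEquiv k A).surjective g
      have hg : g = Module.Dual.eval k A a := by rw [← ha]; rfl
      subst hg
      rw [← hp, hpart2 x a]
      simp [hE, LinearEquiv.symm_apply_apply]
      rw [show Module.Dual.eval k A a = Module.evalEquiv k A a from rfl,
        LinearEquiv.symm_apply_apply]
    rw [heq]
    exact E.bijective
end
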